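/- arXiv:0906.0377 — 4 statements merged into one kernel-verified Lean document; each statement's English description precedes it below -/
import Mathlib

section
/- Let n = a + b, let π be a word consisting of a distinct elements of [n] = {1,...,n} in some order, and let θ be a word consisting of the remaining b elements of [n] in some order. Then the generating function for the major index over all shuffles of θ and π satisfies: Σ_{σ ∈ S(θ,π)} q^{maj(σ)} = [n choose a]_q · q^{maj(θ)+maj(π)}, as an identity of polynomials in q. -/
open Polynomial

/-- The word (1, 2, ..., n) as a list of integers. -/
def W (n : ℕ) : List ℤ := (List.range n).map (fun i => (i : ℤ) + 1)

/-- Descent set of a word: 1-based indices i ∈ {1,...,m-1} with w(i) > w(i+1). -/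
def descSet (w : List ℤ) : Finset ℕ :=
  (Finset.Icc 1 (w.length - 1)).filter (fun i => w.getD (i - 1) 0 > w.getD i 0)

/-- Major index of a word: the sum of its descents. -/
def maj (w : List ℤ) : ℕ := ∑ i ∈ descSet w, i

/-- `dstat w k` is the number of descents of `w` that are ≥ k. -/
def dstat (w : List ℤ) (k : ℕ) : ℕ := ((descSet w).filter (fun i => k ≤ i)).card

/-- Major increment: the change in major index when `r` is inserted into `w`
at (1-based) position `k`. -/
def mi (w : List ℤ) (k : ℕ) (r : ℤ) : ℤ := (maj (w.insertIdx (k - 1) r) : ℤ) - (maj w : ℤ)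

/-- The q-factorial [m]_q! = ∏_{i=1}^m (1 + q + ... + q^{i-1}), as a polynomial in q. -/
noncomputable def qFact (m : ℕ) : Polynomial ℚ :=
  ∏ i ∈ Finset.range m, ∑ j ∈ Finset.range (i + 1), (X : Polynomial ℚ) ^ j

/-- The q-binomial coefficient [n choose a]_q = [n]_q!/([a]_q!·[n−a]_q!). -/
noncomputable def qBinom (n a : ℕ) : Polynomial ℚ := qFact n / (qFact a * qFact (n - a))

/-- The set of all shuffles of two words `θ` and `π` (words containing `θ` and `π`
as complementary subwords). -/
def shuffles (θ π : List ℤ) : Finset (List ℤ) :=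
  (θ ++ π).permutations.toFinset.filter (fun σ => θ.Sublist σ ∧ π.Sublist σ)


noncomputable def qNum (m : ℕ) : Polynomial ℚ := ∑ j ∈ Finset.range m, (X : Polynomial ℚ) ^ j

noncomputable def qFact' (m : ℕ) : Polynomial ℚ := ∏ i ∈ Finset.range m, qNum (i+1)

noncomputable def qb : ℕ → ℕ → Polynomial ℚ
  | _, 0 => 1
  | 0, _+1 => 0
  | n+1, a+1 => qb n a + X^(a+1) * qb n (a+1)

@[simp] lemma qb_zero (n : ℕ) : qb n 0 = 1 := by cases n <;> rfl

lemma qb_succ (n a : ℕ) : qb (n+1) (a+1) = qb n a + X^(a+1) * qb n (a+1) := rfl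

lemma qb_eq_zero {n a : ℕ} (h : n < a) : qb n a = 0 := by
  induction n generalizing a with
  | zero => cases a with | zero => omega | succ a => rfl
  | succ n ih =>
    cases a with
    | zero => omega
    | succ a => rw [qb_succ, ih (by omega), ih (by omega)]; ring

@[simp] lemma qb_self (n : ℕ) : qb n n = 1 := by
  induction n with
  | zero => rfl
  | succ n ih => rw [qb_succ, ih, qb_eq_zero (by omega)]; ring

@[simp] lemma qFact'_zero : qFact' 0 = 1 := rfl

lemma qNum_add (m k : ℕ) : qNum (m + k) = qNum m + X^m * qNum k := by
  unfold qNum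
  rw [Finset.sum_range_add, Finset.mul_sum]
  simp [pow_add]

lemma qFact'_succ (m : ℕ) : qFact' (m+1) = qFact' m * qNum (m+1) := Finset.prod_range_succ _ _

lemma qNum_ne_zero {m : ℕ} (h : 0 < m) : qNum m ≠ 0 := by
  intro hc
  have := congrArg (Polynomial.eval 1) hc
  simp [qNum] at this
  omega

lemma qFact'_ne_zero (m : ℕ) : qFact' m ≠ 0 := by
  induction m with
  | zero => simp
  | succ m ih => rw [qFact'_succ]; exact mul_ne_zero ih (qNum_ne_zero (by omega))

lemma qb_mul_fact : ∀ n a, a ≤ n → qb n a * (qFact' a * qFact' (n - a)) = qFact' n := by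
  intro n
  induction n with
  | zero => intro a ha; interval_cases a; simp
  | succ n ih =>
    intro a ha
    cases a with
    | zero => simp
    | succ a =>
      rcases Nat.lt_or_ge a n with h | h
      · rw [qb_succ, add_mul]
        have e1 : n + 1 - (a+1) = n - a := by omega
        have e2 : qFact' (a+1) = qFact' a * qNum (a+1) := qFact'_succ a
        have e3 : qFact' (n - a) = qFact' (n - (a+1)) * qNum (n - a) := by
          have h4 : n - a = (n - (a+1)) + 1 := by omega
          rw [h4, qFact'_succ]
        have key : qNum (a+1) + X^(a+1) * qNum (n - a) = qNum (n+1) := by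
          rw [← qNum_add]
          congr 1
          omega
        calc qb n a * (qFact' (a+1) * qFact' (n+1-(a+1))) + X^(a+1) * qb n (a+1) * (qFact' (a+1) * qFact' (n+1-(a+1)))
            = (qb n a * (qFact' a * qFact' (n - a))) * qNum (a+1)
              + X^(a+1) * ((qb n (a+1) * (qFact' (a+1) * qFact' (n - (a+1)))) * qNum (n-a)) := by
              rw [e1, e2, e3]; ring
        _ = qFact' n * qNum (a+1) + X^(a+1) * (qFact' n * qNum (n-a)) := by
              rw [ih a (by omega), ih (a+1) (by omega)]
        _ = qFact' n * (qNum (a+1) + X^(a+1) * qNum (n-a)) := by ring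
        _ = qFact' (n+1) := by rw [key, qFact'_succ]
      · have han : a = n := by omega
        subst han
        simp [qb_self]

lemma qb_succ' (n a : ℕ) (h : a ≤ n) : qb (n+1) (a+1) = qb n (a+1) + X^(n-a) * qb n a := by
  apply mul_right_cancel₀ (b := qFact' (a+1) * qFact' (n+1-(a+1)))
    (mul_ne_zero (qFact'_ne_zero _) (qFact'_ne_zero _))
  rw [qb_mul_fact (n+1) (a+1) (by omega), add_mul]
  rcases Nat.lt_or_ge a n with hlt | hge
  · have e1 : n + 1 - (a+1) = n - a := by omega
    have e3 : qFact' (n - a) = qFact' (n - (a+1)) * qNum (n - a) := by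
      have h4 : n - a = (n - (a+1)) + 1 := by omega
      rw [h4, qFact'_succ]
    have e2 : qFact' (a+1) = qFact' a * qNum (a+1) := qFact'_succ a
    have key : qNum (n-a) + X^(n-a) * qNum (a+1) = qNum (n+1) := by
      rw [← qNum_add]
      congr 1
      omega
    symm
    calc qb n (a+1) * (qFact' (a+1) * qFact' (n+1-(a+1))) + X^(n-a) * qb n a * (qFact' (a+1) * qFact' (n+1-(a+1)))
        = (qb n (a+1) * (qFact' (a+1) * qFact' (n-(a+1)))) * qNum (n-a)
          + X^(n-a) * ((qb n a * (qFact' a * qFact' (n-a))) * qNum (a+1)) := by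
          rw [e1, e3, e2]; ring
    _ = qFact' n * qNum (n-a) + X^(n-a) * (qFact' n * qNum (a+1)) := by
          rw [qb_mul_fact n (a+1) (by omega), qb_mul_fact n a (by omega)]
    _ = qFact' n * (qNum (n-a) + X^(n-a) * qNum (a+1)) := by ring
    _ = qFact' (n+1) := by rw [key, qFact'_succ]
  · have han : a = n := by omega
    subst han
    rw [qb_eq_zero (by omega)]
    simp [qb_mul_fact _ _ le_rfl]

lemma qb_symm {n a : ℕ} (h : a ≤ n) : qb n a = qb n (n - a) := by
  induction n generalizing a with
  | zero => interval_cases a; rfl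
  | succ n ih =>
    cases a with
    | zero => simp
    | succ a =>
      rcases Nat.lt_or_ge a n with hlt | hge
      · have e : n + 1 - (a + 1) = (n - (a+1)) + 1 := by omega
        have h2 : qb (n+1) (n-(a+1)+1) = qb n (n-a) + X^(a+1) * qb n (n-(a+1)) := by
          rw [qb_succ' n (n-(a+1)) (by omega), show n-(n-(a+1)) = a+1 by omega,
            show n-(a+1)+1 = n-a by omega]
        rw [e, h2, qb_succ, ih (show a ≤ n by omega), ih (show a+1 ≤ n by omega)]
      · have han : a = n := by omega
        subst han
        simp

lemma maj_singleton (t : ℤ) : maj [t] = 0 := by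
  simp [maj, descSet]

lemma descSet_subset (w : List ℤ) : descSet w ⊆ Finset.Icc 1 (w.length - 1) :=
  Finset.filter_subset _ _

lemma mem_descSet {w : List ℤ} {i : ℕ} :
    i ∈ descSet w ↔ 1 ≤ i ∧ i ≤ w.length - 1 ∧ w.getD i 0 < w.getD (i-1) 0 := by
  simp only [descSet, Finset.mem_filter, Finset.mem_Icc, gt_iff_lt, and_assoc]

lemma maj_concat {l : List ℤ} {x : ℤ} (t : ℤ) (h : l.getLast? = some x) :
    maj (l ++ [t]) = maj l + (if t < x then l.length else 0) := by
  have hne : l ≠ [] := by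
    intro hc; rw [hc] at h; simp at h
  set m := l.length with hm
  have hm1 : 1 ≤ m := by
    have := List.length_pos_iff.mpr hne
    omega
  have hgx : l.getD (m-1) 0 = x := by
    rw [List.getD_eq_getElem?_getD, ← List.getLast?_eq_getElem?, h]
    rfl
  have hlen : (l ++ [t]).length = m + 1 := by simp [hm]
  have hgt : ([t] : List ℤ).getD 0 0 = t := rfl
  have hstep : ∀ i, i ∈ descSet (l++[t]) ↔ (i ∈ descSet l ∨ (i = m ∧ t < x)) := by
    intro i
    rw [mem_descSet, mem_descSet, hlen]
    constructor
    · rintro ⟨h1, h2, h3⟩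
      rcases eq_or_ne i m with rfl | him
      · right
        refine ⟨rfl, ?_⟩
        rw [List.getD_append l [t] 0 (m-1) (by omega), hgx,
          List.getD_append_right l [t] 0 m le_rfl, Nat.sub_self, hgt] at h3
        exact h3
      · left
        refine ⟨h1, by omega, ?_⟩
        rwa [List.getD_append l [t] 0 (i-1) (by omega), List.getD_append l [t] 0 i (by omega)] at h3
    · rintro (⟨h1, h2, h3⟩ | ⟨rfl, hx⟩)
      · refine ⟨h1, by omega, ?_⟩
        rw [List.getD_append l [t] 0 (i-1) (by omega), List.getD_append l [t] 0 i (by omega)]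
        exact h3
      · refine ⟨by omega, by omega, ?_⟩
        rw [List.getD_append l [t] 0 (m-1) (by omega), hgx,
          List.getD_append_right l [t] 0 m le_rfl, Nat.sub_self, hgt]
        exact hx
  have hnotmem : m ∉ descSet l := by
    intro hc
    have := descSet_subset l hc
    simp only [Finset.mem_Icc] at this
    omega
  by_cases hc : t < x
  · have hset : descSet (l ++ [t]) = insert m (descSet l) := by
      ext i
      rw [hstep, Finset.mem_insert]
      constructor
      · rintro (hd | ⟨rfl, _⟩)
        · exact Or.inr hd
        · exact Or.inl rfl
      · rintro (rfl | hd)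
        · exact Or.inr ⟨rfl, hc⟩
        · exact Or.inl hd
    rw [maj, hset, Finset.sum_insert hnotmem, if_pos hc, add_comm]
    rfl
  · have hset : descSet (l ++ [t]) = descSet l := by
      ext i
      rw [hstep]
      constructor
      · rintro (hd | ⟨rfl, hx⟩)
        · exact hd
        · exact absurd hx hc
      · exact Or.inl
    rw [maj, hset, if_neg hc, add_zero]
    rfl

lemma mem_shuffles {θ π σ : List ℤ} :
    σ ∈ shuffles θ π ↔ σ.Perm (θ ++ π) ∧ θ.Sublist σ ∧ π.Sublist σ := by
  simp [shuffles, List.mem_permutations]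

lemma shuffles_comm (θ π : List ℤ) : shuffles θ π = shuffles π θ := by
  ext σ
  rw [mem_shuffles, mem_shuffles]
  constructor <;> rintro ⟨hp, h1, h2⟩ <;>
    exact ⟨hp.trans List.perm_append_comm, h2, h1⟩

lemma shuffles_nil_right (θ : List ℤ) : shuffles θ [] = {θ} := by
  ext σ
  rw [mem_shuffles, Finset.mem_singleton]
  constructor
  · rintro ⟨hp, h1, _⟩
    exact (h1.eq_of_length (by simpa using hp.length_eq.symm)).symm
  · rintro rfl
    exact ⟨by simp, List.Sublist.refl _, List.nil_sublist _⟩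

lemma shuffles_nil_left (π : List ℤ) : shuffles [] π = {π} := by
  rw [shuffles_comm, shuffles_nil_right]

lemma sublist_concat_elim {l s : List ℤ} {t x : ℤ} (h : (l ++ [t]).Sublist (s ++ [x])) :
    (t = x ∧ l.Sublist s) ∨ (l ++ [t]).Sublist s := by
  rw [List.sublist_append_iff] at h
  obtain ⟨l₁, l₂, heq, hs1, hs2⟩ := h
  rcases List.sublist_singleton.mp hs2 with rfl | rfl
  · right
    rw [List.append_nil] at heq
    rw [heq]
    exact hs1
  · left
    obtain ⟨rfl, ht⟩ := List.append_inj' heq rfl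
    exact ⟨(List.cons.injEq _ _ _ _ ▸ ht).1, hs1⟩

lemma sublist_of_concat_notmem {l s : List ℤ} {t : ℤ} (h : l.Sublist (s ++ [t]))
    (hn : t ∉ l) : l.Sublist s := by
  rw [List.sublist_append_iff] at h
  obtain ⟨l₁, l₂, rfl, hs1, hs2⟩ := h
  rcases List.sublist_singleton.mp hs2 with rfl | rfl
  · simpa using hs1
  · exact absurd (by simp) hn

lemma last_classify {θ' π' : List ℤ} {t p : ℤ} {σ : List ℤ}
    (hσ : σ ∈ shuffles (θ'++[t]) (π'++[p]))
    (hnd : ((θ'++[t]) ++ (π'++[p])).Nodup) :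
    σ.getLast? = some t ∨ σ.getLast? = some p := by
  obtain ⟨hp, h1, h2⟩ := mem_shuffles.mp hσ
  have hne : σ ≠ [] := by
    intro hc
    rw [hc] at hp
    have := hp.length_eq
    simp at this
  set x := σ.getLast hne with hx
  have hσeq : σ.dropLast ++ [x] = σ := List.dropLast_append_getLast hne
  have hndσ : σ.Nodup := hp.nodup_iff.mpr hnd
  have hxns : x ∉ σ.dropLast := by
    rw [← hσeq] at hndσ
    rw [List.nodup_append] at hndσ
    intro hc
    exact hndσ.2.2 _ hc _ (by simp) rfl
  have hxmem : x ∈ (θ'++[t]) ++ (π'++[p]) := hp.mem_iff.mp (List.getLast_mem hne)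
  have hlast : σ.getLast? = some x := List.getLast?_eq_getLast hne
  rcases List.mem_append.mp hxmem with hxl | hxr
  · left
    rw [← hσeq] at h1
    rcases sublist_concat_elim h1 with ⟨rfl, _⟩ | hsub
    · exact hlast
    · exact absurd (hsub.subset hxl) hxns
  · right
    rw [← hσeq] at h2
    rcases sublist_concat_elim h2 with ⟨rfl, _⟩ | hsub
    · exact hlast
    · exact absurd (hsub.subset hxr) hxns

lemma perm_rot {θ' π : List ℤ} {t : ℤ} : ((θ' ++ [t]) ++ π).Perm ((θ' ++ π) ++ [t]) := by
  rw [List.append_assoc, List.append_assoc]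
  exact List.Perm.append_left θ' (List.perm_append_comm)

lemma sum_shuffles_last {θ' π : List ℤ} (t : ℤ) (hnd : ((θ'++[t]) ++ π).Nodup)
    (f : List ℤ → Polynomial ℚ) :
    ∑ σ ∈ (shuffles (θ'++[t]) π).filter (fun σ => σ.getLast? = some t), f σ
      = ∑ σ' ∈ shuffles θ' π, f (σ' ++ [t]) := by
  have htπ : t ∉ π := by
    rw [List.nodup_append] at hnd
    intro hc
    exact hnd.2.2 _ (by simp) _ hc rfl
  refine Finset.sum_bij' (fun σ _ => σ.dropLast) (fun σ' _ => σ' ++ [t]) ?_ ?_ ?_ ?_ ?_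
  · -- dropLast lands in shuffles θ' π
    intro σ hσ
    rw [Finset.mem_filter] at hσ
    obtain ⟨hσ, hlast⟩ := hσ
    obtain ⟨hp, h1, h2⟩ := mem_shuffles.mp hσ
    have hne : σ ≠ [] := by
      intro hc; rw [hc] at hlast; simp at hlast
    have hteq : σ.getLast hne = t := by
      have := List.getLast?_eq_getLast hne
      rw [hlast] at this
      exact (Option.some.injEq _ _ ▸ this.symm)
    have hσeq : σ.dropLast ++ [t] = σ := by
      rw [← hteq]
      exact List.dropLast_append_getLast hne
    have hndσ : σ.Nodup := hp.nodup_iff.mpr hnd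
    have htnd : t ∉ σ.dropLast := by
      rw [← hσeq, List.nodup_append] at hndσ
      intro hc
      exact hndσ.2.2 _ hc _ (by simp) rfl
    rw [mem_shuffles]
    refine ⟨?_, ?_, ?_⟩
    · have : (σ.dropLast ++ [t]).Perm ((θ' ++ π) ++ [t]) := by
        rw [hσeq]
        exact hp.trans perm_rot
      exact (List.perm_append_right_iff [t]).mp this
    · rw [← hσeq] at h1
      rcases sublist_concat_elim h1 with ⟨_, hs⟩ | hsub
      · exact hs
      · exact absurd (hsub.subset (by simp)) htnd
    · rw [← hσeq] at h2
      exact sublist_of_concat_notmem h2 htπ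
  · -- append t lands in filter
    intro σ' hσ'
    obtain ⟨hp, h1, h2⟩ := mem_shuffles.mp hσ'
    rw [Finset.mem_filter, mem_shuffles]
    refine ⟨⟨?_, ?_, ?_⟩, List.getLast?_concat⟩
    · exact ((List.perm_append_right_iff [t]).mpr hp).trans perm_rot.symm
    · exact h1.append (List.Sublist.refl [t])
    · exact h2.trans (List.sublist_append_left σ' [t])
  · -- right inverse
    intro σ hσ
    rw [Finset.mem_filter] at hσ
    obtain ⟨_, hlast⟩ := hσ
    have hne : σ ≠ [] := by
      intro hc; rw [hc] at hlast; simp at hlast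
    have hteq : σ.getLast hne = t := by
      have := List.getLast?_eq_getLast hne
      rw [hlast] at this
      exact (Option.some.injEq _ _ ▸ this.symm)
    show σ.dropLast ++ [t] = σ
    conv_rhs => rw [← List.dropLast_append_getLast hne, hteq]
  · intro σ' _
    exact List.dropLast_concat
  · intro σ hσ
    rw [Finset.mem_filter] at hσ
    obtain ⟨_, hlast⟩ := hσ
    have hne : σ ≠ [] := by
      intro hc; rw [hc] at hlast; simp at hlast
    have hteq : σ.getLast hne = t := by
      have := List.getLast?_eq_getLast hne
      rw [hlast] at this
      exact (Option.some.injEq _ _ ▸ this.symm)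
    congr 1
    conv_lhs => rw [← List.dropLast_append_getLast hne, hteq]

lemma sum_shuffles_split {θ' π' : List ℤ} {t p : ℤ}
    (hnd : ((θ'++[t]) ++ (π'++[p])).Nodup) (f : List ℤ → Polynomial ℚ) :
    ∑ σ ∈ shuffles (θ'++[t]) (π'++[p]), f σ
      = (∑ σ ∈ (shuffles (θ'++[t]) (π'++[p])).filter (fun σ => σ.getLast? = some t), f σ)
        + ∑ σ ∈ (shuffles (θ'++[t]) (π'++[p])).filter (fun σ => σ.getLast? = some p), f σ := by
  have htp : t ≠ p := by
    rw [List.nodup_append] at hnd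
    intro hc
    exact hnd.2.2 _ (show t ∈ θ'++[t] by simp) _ (show t ∈ π'++[p] by simp [hc]) rfl
  rw [← Finset.sum_filter_add_sum_filter_not (shuffles (θ'++[t]) (π'++[p]))
    (fun σ => σ.getLast? = some t) f]
  congr 1
  apply Finset.sum_congr _ (fun _ _ => rfl)
  ext σ
  simp only [Finset.mem_filter, and_congr_right_iff]
  intro hσ
  rcases last_classify hσ hnd with h | h <;> simp [h, htp, htp.symm]

lemma REF_base (π' : List ℤ) (t p : ℤ)
    (hnd : ((([]:List ℤ)++[t]) ++ (π'++[p])).Nodup) :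
    ∑ σ ∈ (shuffles (([]:List ℤ)++[t]) (π'++[p])).filter (fun σ => σ.getLast? = some t),
        (X:Polynomial ℚ)^(maj σ)
      = X^(maj (([]:List ℤ)++[t]) + maj (π'++[p]) + (if t < p then π'.length + 1 else 0))
        * qb ((List.length ([]:List ℤ)) + π'.length + 1) (π'.length + 1) := by
  rw [sum_shuffles_last t hnd, shuffles_nil_left, Finset.sum_singleton,
    maj_concat t (List.getLast?_concat (l := π')), List.nil_append, maj_singleton,
    List.length_nil, Nat.zero_add, Nat.zero_add, qb_self, mul_one,
    show (π'++[p]).length = π'.length + 1 from by simp]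

lemma REF (N : ℕ) : ∀ (θ' π' : List ℤ) (t p : ℤ), θ'.length + π'.length ≤ N →
    ((θ'++[t]) ++ (π'++[p])).Nodup →
    ∑ σ ∈ (shuffles (θ'++[t]) (π'++[p])).filter (fun σ => σ.getLast? = some t),
        (X:Polynomial ℚ)^(maj σ)
      = X^(maj (θ'++[t]) + maj (π'++[p]) + (if t < p then π'.length + 1 else 0))
        * qb (θ'.length + π'.length + 1) (π'.length + 1) := by
  induction N with
  | zero =>
    intro θ' π' t p hN hnd
    obtain rfl : θ' = [] := List.length_eq_zero_iff.mp (by omega)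
    exact REF_base π' t p hnd
  | succ N ih =>
    intro θ' π' t p hN hnd
    rcases List.eq_nil_or_concat θ' with rfl | ⟨θ'', t', rfl⟩
    · exact REF_base π' t p hnd
    · -- inductive step
      simp only [List.concat_eq_append] at hN hnd ⊢
      have hN' : θ''.length + π'.length ≤ N := by simp at hN; omega
      have hsub : ((θ''++[t']) ++ (π'++[p])).Sublist (((θ''++[t'])++[t]) ++ (π'++[p])) :=
        List.Sublist.append (List.sublist_append_left _ [t]) (List.Sublist.refl _)
      have hnd2 : ((θ''++[t']) ++ (π'++[p])).Nodup := List.Nodup.sublist hsub hnd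
      have hnd2' : ((π'++[p]) ++ (θ''++[t'])).Nodup :=
        (List.perm_append_comm).nodup_iff.mp hnd2
      -- distinctness
      have hdisj := (List.nodup_append.mp hnd).2.2
      have hL := (List.nodup_append.mp hnd).1
      have hdisjL := (List.nodup_append.mp hL).2.2
      have htt' : t ≠ t' := by
        intro hc
        exact hdisjL _ (show t' ∈ θ''++[t'] by simp) _ (show t ∈ [t] by simp) hc.symm
      have htp : t ≠ p := by
        intro hc
        exact hdisj _ (show t ∈ (θ''++[t'])++[t] by simp) _ (show p ∈ π'++[p] by simp) hc
      have ht'p : t' ≠ p := by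
        intro hc
        exact hdisj _ (show t' ∈ (θ''++[t'])++[t] by simp) _ (show p ∈ π'++[p] by simp) hc
      rw [sum_shuffles_last t hnd,
        sum_shuffles_split hnd2 (fun σ' => (X:Polynomial ℚ)^(maj (σ'++[t])))]
      have hlen_mem : ∀ σ' ∈ shuffles (θ''++[t']) (π'++[p]),
          σ'.length = θ''.length + π'.length + 2 := by
        intro σ' h
        have := (mem_shuffles.mp h).1.length_eq
        simp at this
        omega
      have e1 : ∀ σ' ∈ (shuffles (θ''++[t']) (π'++[p])).filter
          (fun σ => σ.getLast? = some t'),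
          (X:Polynomial ℚ)^(maj (σ'++[t]))
            = X^(if t < t' then θ''.length + π'.length + 2 else 0) * X^(maj σ') := by
        intro σ' hσ'
        rw [Finset.mem_filter] at hσ'
        rw [maj_concat t hσ'.2, hlen_mem σ' hσ'.1, pow_add, mul_comm]
      have e2 : ∀ σ' ∈ (shuffles (θ''++[t']) (π'++[p])).filter
          (fun σ => σ.getLast? = some p),
          (X:Polynomial ℚ)^(maj (σ'++[t]))
            = X^(if t < p then θ''.length + π'.length + 2 else 0) * X^(maj σ') := by
        intro σ' hσ'
        rw [Finset.mem_filter] at hσ'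
        rw [maj_concat t hσ'.2, hlen_mem σ' hσ'.1, pow_add, mul_comm]
      rw [Finset.sum_congr rfl e1, Finset.sum_congr rfl e2, ← Finset.mul_sum, ← Finset.mul_sum]
      rw [ih θ'' π' t' p hN' hnd2]
      rw [shuffles_comm (θ''++[t']) (π'++[p])]
      rw [ih π' θ'' p t' (by omega) hnd2']
      rw [qb_symm (show θ''.length + 1 ≤ π'.length + θ''.length + 1 by omega),
        show π'.length + θ''.length + 1 - (θ''.length + 1) = π'.length from by omega,
        show π'.length + θ''.length + 1 = θ''.length + π'.length + 1 from by omega]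
      rw [maj_concat t (List.getLast?_concat (l := θ'')),
        show (θ''++[t']).length = θ''.length + 1 from by simp]
      rw [show θ''.length + 1 + π'.length + 1 = θ''.length + π'.length + 1 + 1 from by omega]
      by_cases h1 : t < t' <;> by_cases h2 : t < p <;> by_cases h3 : t' < p
      · -- TTT : P1
        have h4 : ¬ p < t' := by omega
        simp only [h1, h2, h3, h4, if_true, if_false]
        rw [qb_succ (θ''.length + π'.length + 1) π'.length]
        ring
      · -- TTF : P2
        have h4 : p < t' := by omega
        simp only [h1, h2, h3, h4, if_true, if_false]
        rw [qb_succ' (θ''.length + π'.length + 1) π'.length (by omega),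
          show θ''.length + π'.length + 1 - π'.length = θ''.length + 1 from by omega]
        ring
      · -- TFT : impossible
        exfalso; omega
      · -- TFF : P1
        have h4 : p < t' := by omega
        simp only [h1, h2, h3, h4, if_true, if_false]
        rw [qb_succ (θ''.length + π'.length + 1) π'.length]
        ring
      · -- FTT : P2
        have h4 : ¬ p < t' := by omega
        simp only [h1, h2, h3, h4, if_true, if_false]
        rw [qb_succ' (θ''.length + π'.length + 1) π'.length (by omega),
          show θ''.length + π'.length + 1 - π'.length = θ''.length + 1 from by omega]
        ring
      · -- FTF : impossible
        exfalso; omega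
      · -- FFT : P1
        have h4 : ¬ p < t' := by omega
        simp only [h1, h2, h3, h4, if_true, if_false]
        rw [qb_succ (θ''.length + π'.length + 1) π'.length]
        ring
      · -- FFF : P2
        have h4 : p < t' := by omega
        simp only [h1, h2, h3, h4, if_true, if_false]
        rw [qb_succ' (θ''.length + π'.length + 1) π'.length (by omega),
          show θ''.length + π'.length + 1 - π'.length = θ''.length + 1 from by omega]
        ring

lemma maj_nil : maj [] = 0 := by simp [maj, descSet]

lemma TOT (θ π : List ℤ) (hnd : (θ++π).Nodup) :
    ∑ σ ∈ shuffles θ π, (X:Polynomial ℚ)^(maj σ)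
      = X^(maj θ + maj π) * qb (θ.length + π.length) π.length := by
  rcases List.eq_nil_or_concat π with rfl | ⟨π', p, rfl⟩
  · rw [shuffles_nil_right, Finset.sum_singleton, maj_nil, List.length_nil]
    simp
  · simp only [List.concat_eq_append] at hnd ⊢
    rcases List.eq_nil_or_concat θ with rfl | ⟨θ', t, rfl⟩
    · rw [shuffles_nil_left, Finset.sum_singleton, maj_nil, List.length_nil]
      rw [show (π'++[p]).length = π'.length + 1 from by simp]
      rw [show (0:ℕ) + (π'.length + 1) = π'.length + 1 from by omega, qb_self, mul_one,
        Nat.zero_add]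
    · simp only [List.concat_eq_append] at hnd ⊢
      have hnd' : ((π'++[p]) ++ (θ'++[t])).Nodup := (List.perm_append_comm).nodup_iff.mp hnd
      have htp : t ≠ p := by
        have hdisj := (List.nodup_append.mp hnd).2.2
        intro hc
        exact hdisj _ (show t ∈ θ'++[t] by simp) _ (show p ∈ π'++[p] by simp) hc
      rw [sum_shuffles_split hnd (fun σ => (X:Polynomial ℚ)^(maj σ))]
      rw [REF (θ'.length + π'.length) θ' π' t p le_rfl hnd]
      rw [shuffles_comm (θ'++[t]) (π'++[p])]
      rw [REF (π'.length + θ'.length) π' θ' p t le_rfl hnd']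
      rw [qb_symm (show θ'.length + 1 ≤ π'.length + θ'.length + 1 by omega),
        show π'.length + θ'.length + 1 - (θ'.length + 1) = π'.length from by omega,
        show π'.length + θ'.length + 1 = θ'.length + π'.length + 1 from by omega]
      rw [show (θ'++[t]).length = θ'.length + 1 from by simp,
        show (π'++[p]).length = π'.length + 1 from by simp]
      rw [show θ'.length + 1 + (π'.length + 1) = θ'.length + π'.length + 1 + 1 from by omega]
      by_cases hc : t < p
      · have hc' : ¬ p < t := by omega
        simp only [hc, hc', if_true, if_false]
        rw [qb_succ (θ'.length + π'.length + 1) π'.length]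
        ring
      · have hc' : p < t := by omega
        simp only [hc, hc', if_true, if_false]
        rw [qb_succ' (θ'.length + π'.length + 1) π'.length (by omega),
          show θ'.length + π'.length + 1 - π'.length = θ'.length + 1 from by omega]
        ring

lemma qFact_eq (m : ℕ) : qFact m = qFact' m := rfl

lemma qBinom_eq {n a : ℕ} (h : a ≤ n) : qBinom n a = qb n a := by
  rw [qBinom, qFact_eq, qFact_eq, qFact_eq, ← qb_mul_fact n a h]
  exact mul_div_cancel_right₀ _ (mul_ne_zero (qFact'_ne_zero _) (qFact'_ne_zero _))

/-- Theorem 1.1: the generating function for the major index over all shuffles of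
`θ` and `π` is `[n choose a]_q · q^(maj θ + maj π)`. -/
theorem major_index_shuffle (n a b : ℕ) (hn : n = a + b) (θ π : List ℤ)
    (hθ : θ.length = b) (hπ : π.length = a)
    (hperm : (θ ++ π).Perm (W n)) :
    ∑ σ ∈ shuffles θ π, (X : Polynomial ℚ) ^ (maj σ) =
      qBinom n a * (X : Polynomial ℚ) ^ (maj θ + maj π) := by
  have hW : (W n).Nodup := by
    unfold W
    simp only [List.pure_def, List.bind_eq_flatMap, ← List.map_eq_flatMap, List.map_map]
    refine List.Nodup.map ?_ ((List.nodup_range (n := n)))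
    intro x y h
    simp only [Function.comp] at h
    omega
  have hnd : (θ ++ π).Nodup := hperm.nodup_iff.mpr hW
  rw [TOT θ π hnd, hθ, hπ, show b + a = n from by omega, qBinom_eq (show a ≤ n by omega),
    mul_comm]
end

section
/- (Garsia–Gessel) Let π_1,...,π_k be words forming ordered complementary subsets of [n], where π_i has length a_i (so a_1+...+a_k = n), and let S(π_1,...,π_k) be the set of permutations of [n] obtained by shuffling π_1,...,π_k. Then Σ_{σ ∈ S(π_1,...,π_k)} q^{maj(σ)} = [n; a_1,...,a_k]_q · q^{maj(π_1)+...+maj(π_k)}, as an identity of polynomials in q. -/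
open Polynomial

/-- The set of all shuffles of a family of words (words containing each member of
`L` as a subword, the members of `L` being complementary subwords). -/
def shufflesMulti (L : List (List ℤ)) : Finset (List ℤ) :=
  L.flatten.permutations.toFinset.filter (fun σ => ∀ w ∈ L, w.Sublist σ)

/-! ### Auxiliary: the strict order on labelled letters -/

namespace GG

/-- strict "sorted" order on labelled letters: labels strictly decrease, or labels
equal and letters strictly increase. -/
def Rel : (ℤ × ℕ) → (ℤ × ℕ) → Prop := fun a b => b.2 < a.2 ∨ (a.2 = b.2 ∧ a.1 < b.1)

instance : DecidableRel Rel := fun a b => by unfold Rel; infer_instance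

instance : IsTrans (ℤ × ℕ) Rel :=
  ⟨by rintro a b c (h | ⟨h1, h2⟩) (h' | ⟨h1', h2'⟩) <;> unfold Rel <;> omega⟩

instance : IsAntisymm (ℤ × ℕ) Rel :=
  ⟨by rintro a b (h | ⟨h1, h2⟩) (h' | ⟨h1', h2'⟩) <;> omega⟩

/-- the boolean total preorder used for merge-sorting labelled letters. -/
def ble : (ℤ × ℕ) → (ℤ × ℕ) → Bool := fun a b => b.2 < a.2 || (a.2 = b.2 && a.1 ≤ b.1)

lemma ble_trans : ∀ (a b c : ℤ × ℕ), ble a b = true → ble b c = true → ble a c = true := by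
  intro a b c h h'; simp only [ble, Bool.or_eq_true, Bool.and_eq_true, decide_eq_true_eq] at *
  omega

lemma ble_total : ∀ (a b : ℤ × ℕ), (ble a b || ble b a) = true := by
  intro a b; simp only [ble, Bool.or_eq_true, Bool.and_eq_true, decide_eq_true_eq]; omega

lemma rel_of_ble {a b : ℤ × ℕ} (h : ble a b = true) (hne : a.1 ≠ b.1) : Rel a b := by
  simp only [ble, Bool.or_eq_true, Bool.and_eq_true, decide_eq_true_eq] at h
  unfold Rel; omega

/-- a mergeSorted list of labelled letters with distinct letters is `Rel`-sorted. -/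
lemma pairwise_rel_of_sorted {u : List (ℤ × ℕ)} (h : u.Pairwise (fun a b => ble a b = true))
    (hd : u.Pairwise (fun a b => a.1 ≠ b.1)) : u.Pairwise Rel :=
  (h.and hd).imp (fun ⟨h1, h2⟩ => rel_of_ble h1 h2)

/-- `Rel`-sorted lists that are permutations of each other coincide. -/
lemma eq_of_perm_of_rel {u v : List (ℤ × ℕ)} (h : u.Perm v) (hu : u.Pairwise Rel)
    (hv : v.Pairwise Rel) : u = v :=
  h.eq_of_pairwise' hu hv

/-- Filtering a nodup list by membership in a sublist recovers the sublist. -/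
lemma filter_mem_of_sublist {θ σ : List ℤ} (h : θ.Sublist σ) (hσ : σ.Nodup) :
    σ.filter (fun x => decide (x ∈ θ)) = θ := by
  induction h with
  | slnil => rfl
  | cons a h ih =>
    rename_i l₁ l₂
    have ha : a ∉ l₂ := by simp [List.nodup_cons] at hσ; exact hσ.1
    have ha' : a ∉ l₁ := fun hm => ha (h.subset hm)
    simp only [List.filter_cons, decide_eq_true_eq]
    rw [if_neg (by simpa using ha')]
    exact ih (by simp [List.nodup_cons] at hσ; exact hσ.2)
  | cons_cons a h ih =>
    rename_i l₁ l₂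
    have ha : a ∉ l₂ := by simp [List.nodup_cons] at hσ; exact hσ.1
    have hσ' : l₂.Nodup := by simp [List.nodup_cons] at hσ; exact hσ.2
    simp only [List.filter_cons, decide_eq_true_eq]
    rw [if_pos (by simp)]
    have : l₂.filter (fun x => decide (x ∈ a :: l₁)) = l₂.filter (fun x => decide (x ∈ l₁)) := by
      apply List.filter_congr
      intro x hx
      have : x ≠ a := fun he => ha (he ▸ hx)
      simp [this]
    rw [this, ih hσ']

/-- Two sublists of a nodup list which are permutations of each other are equal. -/
lemma sublist_eq_of_perm {τ τ' σ : List ℤ} (h : τ.Sublist σ) (h' : τ'.Sublist σ)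
    (hσ : σ.Nodup) (hp : τ.Perm τ') : τ = τ' := by
  have e1 := filter_mem_of_sublist h hσ
  have e2 := filter_mem_of_sublist h' hσ
  rw [← e1, ← e2]
  apply List.filter_congr
  intro x _
  simp only [decide_eq_decide]
  exact ⟨fun hx => hp.subset hx, fun hx => hp.symm.subset hx⟩

lemma zip_fst_snd : ∀ (u : List (ℤ × ℕ)), (u.map Prod.fst).zip (u.map Prod.snd) = u := by
  intro u; induction u with
  | nil => rfl
  | cons a t ih => simp [List.zip_cons_cons, ih]

lemma map_fst_filter (q : ℤ → Bool) :
    ∀ (u : List (ℤ × ℕ)), (u.filter (fun p => q p.1)).map Prod.fst = (u.map Prod.fst).filter q := by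
  intro u; induction u with
  | nil => rfl
  | cons a t ih =>
    by_cases h : q a.1 <;> simp [List.filter_cons, h, ih]

lemma length_le_sum {l : List ℕ} (h : ∀ x ∈ l, 1 ≤ x) : l.length ≤ l.sum := by
  induction l with
  | nil => simp
  | cons a t ih =>
    simp only [List.length_cons, List.sum_cons]
    have := h a (by simp)
    have := ih (fun x hx => h x (by simp [hx]))
    omega

lemma getLast_le_of_mem {l : List ℕ} (hne : l ≠ []) (hs : l.Pairwise (· ≥ ·)) :
    ∀ x ∈ l, l.getLast hne ≤ x := by
  induction l with
  | nil => simp at hne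
  | cons a t ih =>
    intro x hx
    rcases eq_or_ne t [] with rfl | ht
    · simp at hx; simp [hx, List.getLast]
    · rw [List.getLast_cons ht]
      have hs' : t.Pairwise (· ≥ ·) := hs.sublist (List.sublist_cons_self a t)
      rcases List.mem_cons.1 hx with rfl | hxt
      · exact le_trans (ih ht hs' _ (List.getLast_mem ht)) (by
          have := List.pairwise_cons.1 hs
          exact this.1 _ (List.getLast_mem ht))
      · exact ih ht hs' x hxt


def lists (m d : ℕ) : Finset (List ℕ) :=
  (Fintype.piFinset (fun _ : Fin m => Finset.range (d+1))).image (fun f => List.ofFn f)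

lemma mem_lists {m d : ℕ} {l : List ℕ} :
    l ∈ lists m d ↔ l.length = m ∧ ∀ x ∈ l, x ≤ d := by
  constructor
  · intro h
    obtain ⟨f, hf, rfl⟩ := Finset.mem_image.1 h
    refine ⟨by simp, ?_⟩
    intro x hx
    obtain ⟨i, rfl⟩ := Set.mem_range.1 ((List.mem_ofFn' f x).1 hx)
    have := Fintype.mem_piFinset.1 hf i
    simpa [Nat.lt_succ_iff] using this
  · rintro ⟨rfl, hb⟩
    apply Finset.mem_image.2
    refine ⟨fun i => l[(i : ℕ)], ?_, by simp⟩
    apply Fintype.mem_piFinset.2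
    intro i
    simp only [Finset.mem_range, Nat.lt_succ_iff]
    exact hb _ (List.getElem_mem _)



/-- weakly decreasing lists of length m, sum d -/
def Dset (m d : ℕ) : Finset (List ℕ) :=
  (lists m d).filter (fun l => l.Pairwise (· ≥ ·) ∧ l.sum = d)

def p (m d : ℕ) : ℕ := (Dset m d).card

lemma mem_Dset {m d : ℕ} {l : List ℕ} :
    l ∈ Dset m d ↔ l.length = m ∧ l.Pairwise (· ≥ ·) ∧ l.sum = d := by
  unfold Dset
  rw [Finset.mem_filter, mem_lists]
  constructor
  · rintro ⟨⟨h1, _⟩, h3, h4⟩; exact ⟨h1, h3, h4⟩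
  · rintro ⟨h1, h3, h4⟩
    refine ⟨⟨h1, fun x hx => ?_⟩, h3, h4⟩
    exact h4 ▸ List.single_le_sum (fun y _ => Nat.zero_le y) x hx

lemma p_zero (d : ℕ) : p 0 d = if d = 0 then 1 else 0 := by
  unfold p
  rcases eq_or_ne d 0 with rfl | hd
  · rw [if_pos rfl]
    have : Dset 0 0 = {[]} := by
      apply Finset.ext; intro l
      rw [mem_Dset]
      simp [List.length_eq_zero_iff]
      rintro rfl; simp
    simp [this]
  · rw [if_neg hd]
    have : Dset 0 d = ∅ := by
      apply Finset.eq_empty_of_forall_notMem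
      intro l hl
      rw [mem_Dset] at hl
      obtain ⟨h1, _, h3⟩ := hl
      rw [List.length_eq_zero_iff] at h1
      subst h1; simp at h3; exact hd h3.symm
    simp [this]


lemma p_succ (m d : ℕ) :
    p (m+1) d = p m d + (if m+1 ≤ d then p (m+1) (d - (m+1)) else 0) := by
  classical
  have hsplit := Finset.card_filter_add_card_filter_not
    (s := Dset (m+1) d) (p := fun l => (0 : ℕ) ∈ l)
  -- first: lists containing 0 ↔ Dset m d
  have h1 : ((Dset (m+1) d).filter (fun l => (0:ℕ) ∈ l)).card = p m d := by
    apply Finset.card_nbij' (fun l => l.dropLast) (fun g => g ++ [0])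
    · intro l hl; simp only [Finset.mem_coe] at *
      rw [Finset.mem_filter, mem_Dset] at hl
      obtain ⟨⟨h1, h2, h3⟩, h4⟩ := hl
      have hne : l ≠ [] := by intro h; rw [h] at h1; simp at h1
      have hlast : l.getLast hne = 0 := Nat.le_zero.1 (getLast_le_of_mem hne h2 0 h4)
      rw [mem_Dset]
      refine ⟨by simp [h1], h2.sublist (List.dropLast_sublist l), ?_⟩
      have := List.dropLast_append_getLast hne
      calc l.dropLast.sum = (l.dropLast ++ [l.getLast hne]).sum - l.getLast hne := by
            simp
        _ = d := by rw [this, hlast, h3]; simp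
    · intro g hg; simp only [Finset.mem_coe] at *
      rw [mem_Dset] at hg
      obtain ⟨h1, h2, h3⟩ := hg
      rw [Finset.mem_filter, mem_Dset]
      refine ⟨⟨by simp [h1], ?_, by simp [h3]⟩, by simp⟩
      rw [List.pairwise_append]
      exact ⟨h2, by simp, fun a _ b hb => by simp at hb; omega⟩
    · intro l hl; simp only [Finset.mem_coe] at *
      rw [Finset.mem_filter, mem_Dset] at hl
      obtain ⟨⟨h1, h2, h3⟩, h4⟩ := hl
      have hne : l ≠ [] := by intro h; rw [h] at h1; simp at h1
      have hlast : l.getLast hne = 0 := Nat.le_zero.1 (getLast_le_of_mem hne h2 0 h4)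
      conv_rhs => rw [← List.dropLast_append_getLast hne]
      rw [hlast]
    · intro g _
      exact List.dropLast_concat
  -- second: lists not containing 0
  have h2 : ((Dset (m+1) d).filter (fun l => ¬ (0:ℕ) ∈ l)).card
      = (if m+1 ≤ d then p (m+1) (d - (m+1)) else 0) := by
    by_cases hd : m+1 ≤ d
    · rw [if_pos hd]
      apply Finset.card_nbij' (fun l => l.map (· - 1)) (fun g => g.map (· + 1))
      · intro l hl; simp only [Finset.mem_coe] at *
        rw [Finset.mem_filter, mem_Dset] at hl
        obtain ⟨⟨h1, h2, h3⟩, h4⟩ := hl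
        have hpos : ∀ x ∈ l, 1 ≤ x := by
          intro x hx; rcases Nat.eq_zero_or_pos x with rfl | h; exact absurd hx h4; exact h
        rw [mem_Dset]
        refine ⟨by simp [h1], ?_, ?_⟩
        · rw [List.pairwise_map]; exact h2.imp (fun h => by omega)
        · have : (l.map (· - 1)).sum = l.sum - l.length := by
            clear h2 h3 h4 h1
            induction l with
            | nil => simp
            | cons a t ih =>
              simp only [List.map_cons, List.sum_cons, List.length_cons]
              have ha := hpos a (by simp)
              have ht : ∀ x ∈ t, 1 ≤ x := fun x hx => hpos x (by simp [hx])
              have hts := length_le_sum ht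
              rw [ih ht]; omega
          rw [this, h3, h1]
      · intro g hg; simp only [Finset.mem_coe] at *
        rw [mem_Dset] at hg
        obtain ⟨h1, h2, h3⟩ := hg
        rw [Finset.mem_filter, mem_Dset]
        refine ⟨⟨by simp [h1], ?_, ?_⟩, by simp⟩
        · rw [List.pairwise_map]; exact h2.imp (fun h => by omega)
        · have : (g.map (· + 1)).sum = g.sum + g.length := by
            induction g with
            | nil => simp
            | cons a t ih => simp at ih ⊢; omega
          rw [this, h3, h1]; omega
      · intro l hl; simp only [Finset.mem_coe] at *
        rw [Finset.mem_filter, mem_Dset] at hl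
        obtain ⟨⟨h1, h2, h3⟩, h4⟩ := hl
        rw [List.map_map]
        have : ∀ x ∈ l, (((· + 1) ∘ (· - 1)) x) = id x := by
          intro x hx
          rcases Nat.eq_zero_or_pos x with rfl | h
          · exact absurd hx h4
          · simp; omega
        rw [List.map_congr_left this, List.map_id]
      · intro g _; dsimp only
        rw [List.map_map]
        have : ∀ x ∈ g, (((· - 1) ∘ (· + 1)) x) = id x := by intro x _; simp
        rw [List.map_congr_left this, List.map_id]
    · rw [if_neg hd]
      rw [Finset.card_eq_zero]
      apply Finset.eq_empty_of_forall_notMem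
      intro l hl
      rw [Finset.mem_filter, mem_Dset] at hl
      obtain ⟨⟨h1, h2, h3⟩, h4⟩ := hl
      have hpos : ∀ x ∈ l, 1 ≤ x := by
        intro x hx; rcases Nat.eq_zero_or_pos x with rfl | h; exact absurd hx h4; exact h
      have := length_le_sum hpos
      omega
  unfold p at *
  omega




/-! ### descent set basics -/

lemma mem_descSet {w : List ℤ} {j : ℕ} (hj : j + 1 < w.length) :
    (j+1) ∈ descSet w ↔ w[j] > w[j+1] := by
  unfold descSet
  rw [Finset.mem_filter, Finset.mem_Icc]
  constructor
  · rintro ⟨_, h⟩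
    rwa [Nat.add_sub_cancel, List.getD_eq_getElem _ _ (by omega),
      List.getD_eq_getElem _ _ hj] at h
  · intro h
    refine ⟨⟨by omega, by omega⟩, ?_⟩
    rw [Nat.add_sub_cancel, List.getD_eq_getElem _ _ (by omega), List.getD_eq_getElem _ _ hj]
    exact h

lemma descSet_bounds {w : List ℤ} {i : ℕ} (h : i ∈ descSet w) :
    1 ≤ i ∧ i + 1 ≤ w.length := by
  unfold descSet at h
  rw [Finset.mem_filter, Finset.mem_Icc] at h
  have h1 := h.1
  rcases w with _ | ⟨x, t⟩
  · simp only [List.length_nil] at h1 ⊢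
    omega
  · simp only [List.length_cons] at h1 ⊢
    omega

lemma dstat_eq_zero {w : List ℤ} {k : ℕ} (hk : w.length ≤ k) : dstat w k = 0 := by
  unfold dstat
  rw [Finset.card_eq_zero]
  apply Finset.eq_empty_of_forall_notMem
  intro i hi
  rw [Finset.mem_filter] at hi
  have := descSet_bounds hi.1
  omega

lemma dstat_succ (w : List ℤ) (j : ℕ) :
    dstat w (j+1) = dstat w (j+2) + (if (j+1) ∈ descSet w then 1 else 0) := by
  unfold dstat
  rw [Finset.card_filter, Finset.card_filter]
  have : (if (j+1) ∈ descSet w then 1 else 0)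
      = ∑ i ∈ descSet w, if i = j+1 then 1 else 0 := by
    rw [Finset.sum_ite_eq' (descSet w) (j+1) (fun _ => 1)]
  rw [this, ← Finset.sum_add_distrib]
  apply Finset.sum_congr rfl
  intro i _
  split_ifs <;> omega

lemma sum_dstat (w : List ℤ) :
    ∑ j ∈ Finset.range w.length, dstat w (j+1) = maj w := by
  unfold dstat maj
  have : ∀ j, ((descSet w).filter (fun i => j+1 ≤ i)).card
      = ∑ i ∈ descSet w, if j+1 ≤ i then 1 else 0 := fun j => Finset.card_filter _ _
  simp_rw [this]
  rw [Finset.sum_comm]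
  apply Finset.sum_congr rfl
  intro i hi
  have hb := descSet_bounds hi
  have : ∑ j ∈ Finset.range w.length, (if j+1 ≤ i then 1 else 0)
      = ((Finset.range w.length).filter (fun j => j+1 ≤ i)).card := by
    rw [Finset.card_filter]
  rw [this]
  have : (Finset.range w.length).filter (fun j => j+1 ≤ i) = Finset.range i := by
    apply Finset.ext
    intro j
    rw [Finset.mem_filter, Finset.mem_range, Finset.mem_range]
    omega
  rw [this, Finset.card_range]

/-! ### getD plumbing -/

lemma sum_eq_getD (l : List ℕ) : l.sum = ∑ j ∈ Finset.range l.length, l.getD j 0 := by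
  rw [← Fin.sum_univ_eq_sum_range (fun j => l.getD j 0) l.length]
  conv_lhs => rw [← List.ofFn_getElem (xs := l), List.sum_ofFn]
  apply Finset.sum_congr rfl
  intro i _
  simp [List.getD_eq_getElem l 0 i.isLt]

lemma getD_zipWith {f : ℕ → ℕ → ℕ} {a b : List ℕ} {j : ℕ} (h1 : j < a.length)
    (h2 : j < b.length) :
    (List.zipWith f a b).getD j 0 = f (a.getD j 0) (b.getD j 0) := by
  rw [List.getD_eq_getElem _ _ (by rw [List.length_zipWith]; omega),
    List.getD_eq_getElem _ _ h1, List.getD_eq_getElem _ _ h2, List.getElem_zipWith]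

/-- weak-decreasing via getD -/
lemma sorted_iff_getD {g : List ℕ} :
    g.Pairwise (· ≥ ·) ↔ ∀ j, j + 1 < g.length → g.getD (j+1) 0 ≤ g.getD j 0 := by
  haveI : IsTrans ℕ (· ≥ ·) := ⟨fun _ _ _ h h' => le_trans h' h⟩
  rw [← List.isChain_iff_pairwise, List.isChain_iff_getElem]
  constructor
  · intro h j hj
    have := h j (by omega)
    rwa [← List.getD_eq_getElem g 0 (by omega),
      ← List.getD_eq_getElem g 0 (by omega)] at this
  · intro h j hj
    have := h j (by omega)
    rwa [← List.getD_eq_getElem g 0 (by omega),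
      ← List.getD_eq_getElem g 0 (by omega)]

/-- compatibility via getD -/
lemma compat_iff_getD {w : List ℤ} {l : List ℕ} (hw : w.Nodup) (hl : l.length = w.length) :
    (w.zip l).Pairwise Rel ↔ ∀ j, j + 1 < w.length →
      (l.getD (j+1) 0 ≤ l.getD j 0 ∧ ((j+1) ∈ descSet w → l.getD (j+1) 0 < l.getD j 0)) := by
  rw [← List.isChain_iff_pairwise, List.isChain_iff_getElem]
  have hzl : (w.zip l).length = w.length := by rw [List.length_zip]; omega
  constructor
  · intro h j hj
    have hh := h j (by omega)
    simp only [List.getElem_zip] at hh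
    have hd : (j+1) ∈ descSet w ↔ w[j]'(by omega) > w[j+1]'(by omega) := mem_descSet hj
    rw [List.getD_eq_getElem l 0 (by omega), List.getD_eq_getElem l 0 (by omega)]
    rcases hh with h' | ⟨h1, h2⟩
    · exact ⟨le_of_lt h', fun _ => h'⟩
    · refine ⟨le_of_eq h1.symm, fun hdd => absurd (hd.1 hdd) (by exact not_lt.2 (le_of_lt h2))⟩
  · intro h j hj
    have hj' : j + 1 < w.length := by
      rw [hzl] at hj
      omega
    have hh := h j hj'
    simp only [List.getElem_zip]
    have hd := mem_descSet (w := w) hj'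
    rw [List.getD_eq_getElem l 0 (by omega), List.getD_eq_getElem l 0 (by omega)] at hh
    have hne : w[j]'(by omega) ≠ w[j+1]'(by omega) := by
      intro he
      have := (List.Nodup.getElem_inj_iff hw).1 he
      omega
    unfold Rel
    rcases lt_or_gt_of_ne hne with hlt | hgt
    · rcases lt_or_eq_of_le hh.1 with h' | h'
      · left; exact h'
      · right; exact ⟨h'.symm, hlt⟩
    · left; exact hh.2 (hd.2 hgt)

/-! ### counting compatible labellings -/

/-- labellings of `w` compatible with it, with label sum `d` -/
def Cset (w : List ℤ) (d : ℕ) : Finset (List ℕ) :=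
  (lists w.length d).filter (fun l => (w.zip l).Pairwise Rel ∧ l.sum = d)

def A (w : List ℤ) (d : ℕ) : ℕ := (Cset w d).card

lemma mem_Cset {w : List ℤ} {d : ℕ} {l : List ℕ} :
    l ∈ Cset w d ↔ l.length = w.length ∧ (w.zip l).Pairwise Rel ∧ l.sum = d := by
  unfold Cset
  rw [Finset.mem_filter, mem_lists]
  constructor
  · rintro ⟨⟨h1, _⟩, h3, h4⟩; exact ⟨h1, h3, h4⟩
  · rintro ⟨h1, h3, h4⟩
    refine ⟨⟨h1, fun x hx => ?_⟩, h3, h4⟩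
    exact h4 ▸ List.single_le_sum (fun y _ => Nat.zero_le y) x hx

/-- The transfer lemma: compatible labellings of `w` with sum `d` are counted by
weakly decreasing sequences with sum `d - maj w`. -/
lemma A_eq (w : List ℤ) (hw : w.Nodup) (d : ℕ) :
    A w d = if maj w ≤ d then p w.length (d - maj w) else 0 := by
  classical
  set m := w.length with hm
  set del : List ℕ := List.ofFn (fun j : Fin m => dstat w ((j:ℕ)+1)) with hdel
  have hdlen : del.length = m := by simp [hdel]
  have hdget : ∀ j, j < m → del.getD j 0 = dstat w (j+1) := by
    intro j hj
    rw [List.getD_eq_getElem del 0 (by omega)]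
    simp [hdel]
  have hdsum : del.sum = maj w := by
    rw [sum_eq_getD, hdlen]
    rw [← sum_dstat w, ← hm]
    apply Finset.sum_congr rfl
    intro j hj
    exact hdget j (Finset.mem_range.1 hj)
  -- pointwise bound for compatible labellings
  have hbound : ∀ l : List ℕ, l.length = m → (w.zip l).Pairwise Rel →
      ∀ j, j < m → dstat w (j+1) ≤ l.getD j 0 := by
    intro l hl hc
    have hcc := (compat_iff_getD hw (by omega)).1 hc
    have key : ∀ t j, j < m → m - 1 - j ≤ t → dstat w (j+1) ≤ l.getD j 0 := by
      intro t
      induction t with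
      | zero =>
        intro j hj h0
        have hj' : j = m - 1 := by omega
        have : dstat w (j + 1) = 0 := dstat_eq_zero (by omega)
        omega
      | succ t ih =>
        intro j hj hle
        by_cases hje : j + 1 < m
        · have hstep : dstat w (j+2) ≤ l.getD (j+1) 0 := ih (j+1) (by omega) (by omega)
          have h2 := hcc j (by omega)
          rw [dstat_succ w j]
          by_cases hmem : (j+1) ∈ descSet w
          · have h3 := h2.2 hmem
            rw [if_pos hmem]
            omega
          · rw [if_neg hmem]
            have h3 := h2.1
            omega
        · have hj' : j = m - 1 := by omega
          have : dstat w (j + 1) = 0 := dstat_eq_zero (by omega)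
          omega
    intro j hj
    exact key (m - 1 - j) j hj le_rfl
  by_cases hmaj : maj w ≤ d
  · rw [if_pos hmaj]
    unfold A p
    apply Finset.card_nbij' (fun l => List.zipWith (fun a b => a - b) l del)
      (fun g => List.zipWith (· + ·) g del)
    · -- forward well-defined
      intro l hl; simp only [Finset.mem_coe] at *
      rw [mem_Cset] at hl
      obtain ⟨h1, h2, h3⟩ := hl
      have hb := hbound l h1 h2
      have hcc := (compat_iff_getD hw (by omega)).1 h2
      have hflen : (List.zipWith (fun a b => a - b) l del).length = m := by
        rw [List.length_zipWith]; omega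
      rw [mem_Dset]
      refine ⟨hflen, ?_, ?_⟩
      · rw [sorted_iff_getD]
        intro j hj
        rw [hflen] at hj
        rw [getD_zipWith (by omega) (by omega), getD_zipWith (by omega) (by omega)]
        have e1 : del.getD j 0 = dstat w (j+1) := hdget j (by omega)
        have e2 : del.getD (j+1) 0 = dstat w (j+2) := hdget (j+1) (by omega)
        have e3 := dstat_succ w j
        have e4 := hcc j (by omega)
        have e5 : dstat w (j+1) ≤ l.getD j 0 := hb j (by omega)
        have e6 : dstat w (j+2) ≤ l.getD (j+1) 0 := hb (j+1) (by omega)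
        rw [e1, e2]
        split_ifs at e3 with hmem
        · have := e4.2 hmem; omega
        · have := e4.1; omega
      · -- sum
        have : (List.zipWith (fun a b => a - b) l del).sum + del.sum = l.sum := by
          rw [sum_eq_getD, sum_eq_getD, sum_eq_getD, hflen, hdlen, h1, ← Finset.sum_add_distrib]
          apply Finset.sum_congr rfl
          intro j hj
          rw [Finset.mem_range] at hj
          rw [getD_zipWith (by omega) (by omega)]
          have := hb j hj
          rw [hdget j hj] at *
          omega
        rw [hdsum, h3] at this
        omega
    · -- backward well-defined
      intro g hg; simp only [Finset.mem_coe] at *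
      rw [mem_Dset] at hg
      obtain ⟨h1, h2, h3⟩ := hg
      have hglen : (List.zipWith (· + ·) g del).length = m := by
        rw [List.length_zipWith]; omega
      have hsor := sorted_iff_getD.1 h2
      rw [mem_Cset]
      refine ⟨by omega, ?_, ?_⟩
      · rw [compat_iff_getD hw (by omega)]
        intro j hj
        rw [getD_zipWith (by omega) (by omega), getD_zipWith (by omega) (by omega)]
        have e1 : del.getD j 0 = dstat w (j+1) := hdget j (by omega)
        have e2 : del.getD (j+1) 0 = dstat w (j+2) := hdget (j+1) (by omega)
        have e3 := dstat_succ w j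
        have e4 := hsor j (by omega)
        rw [e1, e2]
        constructor
        · split_ifs at e3 <;> omega
        · intro hmem
          rw [if_pos hmem] at e3
          omega
      · have : (List.zipWith (· + ·) g del).sum = g.sum + del.sum := by
          rw [sum_eq_getD, sum_eq_getD, sum_eq_getD, hglen, h1, hdlen, ← Finset.sum_add_distrib]
          apply Finset.sum_congr rfl
          intro j hj
          rw [Finset.mem_range] at hj
          rw [getD_zipWith (by omega) (by omega)]
        rw [this, h3, hdsum]
        omega
    · -- G (F l) = l
      intro l hl; simp only [Finset.mem_coe] at *
      rw [mem_Cset] at hl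
      obtain ⟨h1, h2, _⟩ := hl
      have hb := hbound l (by omega) h2
      apply List.ext_getElem
      · rw [List.length_zipWith, List.length_zipWith]
        simp only [hdlen]
        omega
      · intro j hj1 hj2
        have hj : j < m := by omega
        rw [List.getElem_zipWith, List.getElem_zipWith]
        have hbj := hb j hj
        rw [List.getD_eq_getElem l 0 (by omega)] at hbj
        have hde : del[j]'(by omega) = dstat w (j+1) := by
          have := hdget j hj
          rwa [List.getD_eq_getElem del 0 (by omega)] at this
        rw [hde]
        omega
    · -- F (G g) = g
      intro g hg; simp only [Finset.mem_coe] at *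
      rw [mem_Dset] at hg
      obtain ⟨h1, _, _⟩ := hg
      apply List.ext_getElem
      · rw [List.length_zipWith, List.length_zipWith]
        simp only [hdlen]
        omega
      · intro j hj1 hj2
        rw [List.getElem_zipWith, List.getElem_zipWith]
        omega
  · rw [if_neg hmaj]
    unfold A
    rw [Finset.card_eq_zero]
    apply Finset.eq_empty_of_forall_notMem
    intro l hl
    rw [mem_Cset] at hl
    obtain ⟨h1, h2, h3⟩ := hl
    have hb := hbound l (by omega) h2
    have : del.sum ≤ l.sum := by
      rw [sum_eq_getD, sum_eq_getD, hdlen, h1, ← hm]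
      apply Finset.sum_le_sum
      intro j hj
      rw [Finset.mem_range] at hj
      rw [hdget j hj]
      exact hb j hj
    rw [hdsum, h3] at this
    omega




lemma mem_shuffles {θ π σ : List ℤ} :
    σ ∈ shuffles θ π ↔ σ.Perm (θ ++ π) ∧ θ.Sublist σ ∧ π.Sublist σ := by
  unfold shuffles
  rw [Finset.mem_filter, List.mem_toFinset, List.mem_permutations]

lemma A_split (θ π : List ℤ) (h : (θ ++ π).Nodup) (d : ℕ) :
    ∑ σ ∈ shuffles θ π, A σ d = ∑ pr ∈ Finset.HasAntidiagonal.antidiagonal d, A θ pr.1 * A π pr.2 := by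
  classical
  obtain ⟨hθnd, hπnd, hdisj⟩ := List.nodup_append'.1 h
  have lhs_eq : ∑ σ ∈ shuffles θ π, A σ d
      = ((shuffles θ π).sigma (fun σ => Cset σ d)).card := by
    rw [Finset.card_sigma]
    rfl
  have rhs_eq : ∑ pr ∈ Finset.HasAntidiagonal.antidiagonal d, A θ pr.1 * A π pr.2
      = ((Finset.HasAntidiagonal.antidiagonal d).sigma (fun pr => Cset θ pr.1 ×ˢ Cset π pr.2)).card := by
    rw [Finset.card_sigma]
    apply Finset.sum_congr rfl
    intro pr _
    rw [Finset.card_product]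
    rfl
  rw [lhs_eq, rhs_eq]
  apply Finset.card_nbij'
    (i := fun x =>
      ⟨((((x.1.zip x.2).filter (fun p => decide (p.1 ∈ θ))).map Prod.snd).sum,
        (((x.1.zip x.2).filter (fun p => decide (p.1 ∈ π))).map Prod.snd).sum),
       ((((x.1.zip x.2).filter (fun p => decide (p.1 ∈ θ))).map Prod.snd),
        (((x.1.zip x.2).filter (fun p => decide (p.1 ∈ π))).map Prod.snd))⟩)
    (j := fun y =>
      ⟨(((θ.zip y.2.1 ++ π.zip y.2.2).mergeSort ble).map Prod.fst),
       (((θ.zip y.2.1 ++ π.zip y.2.2).mergeSort ble).map Prod.snd)⟩)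
  · -- forward well-defined
    rintro ⟨σ, l⟩ hx
    rw [Finset.mem_coe, Finset.mem_sigma] at hx
    obtain ⟨hσ, hl⟩ := hx
    obtain ⟨hperm, hθs, hπs⟩ := mem_shuffles.1 hσ
    have hσnd : σ.Nodup := hperm.nodup_iff.2 h
    obtain ⟨hlen, hpw, hsum⟩ := mem_Cset.1 hl
    dsimp only
    set zl := σ.zip l with hzl
    have mzfst : zl.map Prod.fst = σ := List.map_fst_zip (le_of_eq hlen.symm)
    have mzsnd : zl.map Prod.snd = l := List.map_snd_zip (le_of_eq hlen)
    set u1 := zl.filter (fun p => decide (p.1 ∈ θ)) with hu1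
    set u2 := zl.filter (fun p => decide (p.1 ∈ π)) with hu2
    have m1fst : u1.map Prod.fst = θ := by
      rw [hu1, map_fst_filter (fun x => decide (x ∈ θ)) zl, mzfst]
      exact filter_mem_of_sublist hθs hσnd
    have m2fst : u2.map Prod.fst = π := by
      rw [hu2, map_fst_filter (fun x => decide (x ∈ π)) zl, mzfst]
      exact filter_mem_of_sublist hπs hσnd
    have hmem_excl : ∀ p ∈ zl, (decide (p.1 ∈ π) : Bool) = !(decide (p.1 ∈ θ)) := by
      rintro ⟨a, b⟩ hp
      have ha : a ∈ σ := (List.of_mem_zip hp).1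
      have ha' : a ∈ θ ++ π := hperm.subset ha
      rcases List.mem_append.1 ha' with haθ | haπ
      · have : a ∉ π := hdisj haθ
        simp [haθ, this]
      · have : a ∉ θ := fun hc => hdisj hc haπ
        simp [haπ, this]
    have hsplit : u1 ++ u2 = u1 ++ zl.filter (fun p => !(decide (p.1 ∈ θ))) := by
      rw [hu2]
      congr 1
      exact List.filter_congr hmem_excl
    have hperm12 : (u1 ++ u2).Perm zl := by
      rw [hsplit]
      exact List.filter_append_perm _ zl
    have hsumsplit : (u1.map Prod.snd).sum + (u2.map Prod.snd).sum = d := by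
      have := (hperm12.map Prod.snd).sum_eq
      rw [List.map_append, List.sum_append] at this
      rw [this, mzsnd, hsum]
    rw [Finset.mem_coe, Finset.mem_sigma]
    constructor
    · rw [Finset.HasAntidiagonal.mem_antidiagonal]
      exact hsumsplit
    · rw [Finset.mem_product]
      constructor
      · rw [mem_Cset]
        have hzip1 : θ.zip (u1.map Prod.snd) = u1 := by
          conv_lhs => rw [← m1fst]
          exact zip_fst_snd u1
        refine ⟨?_, ?_, rfl⟩
        · have := congrArg List.length m1fst
          simp only [List.length_map] at this ⊢
          omega
        · rw [hzip1]
          exact hpw.sublist (List.filter_sublist (l := zl))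
      · rw [mem_Cset]
        have hzip2 : π.zip (u2.map Prod.snd) = u2 := by
          conv_lhs => rw [← m2fst]
          exact zip_fst_snd u2
        refine ⟨?_, ?_, rfl⟩
        · have := congrArg List.length m2fst
          simp only [List.length_map] at this ⊢
          omega
        · rw [hzip2]
          exact hpw.sublist (List.filter_sublist (l := zl))
  · -- backward well-defined
    rintro ⟨⟨d1, d2⟩, l1, l2⟩ hy
    rw [Finset.mem_coe, Finset.mem_sigma, Finset.HasAntidiagonal.mem_antidiagonal, Finset.mem_product] at hy
    obtain ⟨hd, hl1, hl2⟩ := hy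
    obtain ⟨hlen1, hpw1, hsum1⟩ := mem_Cset.1 hl1
    obtain ⟨hlen2, hpw2, hsum2⟩ := mem_Cset.1 hl2
    dsimp only at *
    set c := θ.zip l1 ++ π.zip l2 with hc
    set ms := c.mergeSort ble with hms
    have hmsperm : ms.Perm c := List.mergeSort_perm c ble
    have cfst : c.map Prod.fst = θ ++ π := by
      rw [hc, List.map_append, List.map_fst_zip (le_of_eq hlen1.symm),
        List.map_fst_zip (le_of_eq hlen2.symm)]
    have csnd : c.map Prod.snd = l1 ++ l2 := by
      rw [hc, List.map_append, List.map_snd_zip (le_of_eq hlen1),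
        List.map_snd_zip (le_of_eq hlen2)]
    have msfst_perm : (ms.map Prod.fst).Perm (θ ++ π) := cfst ▸ hmsperm.map Prod.fst
    have msfst_nodup : (ms.map Prod.fst).Nodup := msfst_perm.nodup_iff.2 h
    have pdist : ms.Pairwise (fun a b => a.1 ≠ b.1) := List.pairwise_map.1 msfst_nodup
    have pmsle : ms.Pairwise (fun a b => ble a b = true) :=
      List.pairwise_mergeSort ble_trans ble_total c
    have pmsR : ms.Pairwise Rel := pairwise_rel_of_sorted pmsle pdist
    have mszip : (ms.map Prod.fst).zip (ms.map Prod.snd) = ms := zip_fst_snd ms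
    -- the filter of ms by θ-membership is θ.zip l1
    have hself1 : (θ.zip l1).filter (fun p => decide (p.1 ∈ θ)) = θ.zip l1 := by
      rw [List.filter_eq_self]
      rintro ⟨a, b⟩ hp
      simpa using (List.of_mem_zip hp).1
    have hnil1 : (π.zip l2).filter (fun p => decide (p.1 ∈ θ)) = [] := by
      rw [List.filter_eq_nil_iff]
      rintro ⟨a, b⟩ hp
      have := (List.of_mem_zip hp).1
      simp only [decide_eq_true_eq]
      exact fun hc' => hdisj hc' this
    have hself2 : (π.zip l2).filter (fun p => decide (p.1 ∈ π)) = π.zip l2 := by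
      rw [List.filter_eq_self]
      rintro ⟨a, b⟩ hp
      simpa using (List.of_mem_zip hp).1
    have hnil2 : (θ.zip l1).filter (fun p => decide (p.1 ∈ π)) = [] := by
      rw [List.filter_eq_nil_iff]
      rintro ⟨a, b⟩ hp
      have := (List.of_mem_zip hp).1
      simp only [decide_eq_true_eq]
      exact fun hc' => hdisj this hc'
    have hfil1 : ms.filter (fun p => decide (p.1 ∈ θ)) = θ.zip l1 := by
      apply eq_of_perm_of_rel
      · have hp1 : (ms.filter (fun p => decide (p.1 ∈ θ))).Perm
            (c.filter (fun p => decide (p.1 ∈ θ))) := hmsperm.filter _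
        have hp2 : c.filter (fun p => decide (p.1 ∈ θ)) = θ.zip l1 := by
          rw [hc, List.filter_append, hself1, hnil1, List.append_nil]
        exact hp2 ▸ hp1
      · exact pmsR.sublist (List.filter_sublist (l := ms))
      · exact hpw1
    have hfil2 : ms.filter (fun p => decide (p.1 ∈ π)) = π.zip l2 := by
      apply eq_of_perm_of_rel
      · have hp1 : (ms.filter (fun p => decide (p.1 ∈ π))).Perm
            (c.filter (fun p => decide (p.1 ∈ π))) := hmsperm.filter _
        have hp2 : c.filter (fun p => decide (p.1 ∈ π)) = π.zip l2 := by
          rw [hc, List.filter_append, hnil2, hself2, List.nil_append]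
        exact hp2 ▸ hp1
      · exact pmsR.sublist (List.filter_sublist (l := ms))
      · exact hpw2
    rw [Finset.mem_coe, Finset.mem_sigma]
    constructor
    · rw [mem_shuffles]
      refine ⟨msfst_perm, ?_, ?_⟩
      · have : θ = (ms.map Prod.fst).filter (fun x => decide (x ∈ θ)) := by
          rw [← map_fst_filter (fun x => decide (x ∈ θ)) ms, hfil1, List.map_fst_zip (le_of_eq hlen1.symm)]
        rw [this]
        exact List.filter_sublist
      · have : π = (ms.map Prod.fst).filter (fun x => decide (x ∈ π)) := by
          rw [← map_fst_filter (fun x => decide (x ∈ π)) ms, hfil2, List.map_fst_zip (le_of_eq hlen2.symm)]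
        rw [this]
        exact List.filter_sublist
    · rw [mem_Cset]
      refine ⟨by simp, ?_, ?_⟩
      · rw [mszip]
        exact pmsR
      · have := (hmsperm.map Prod.snd).sum_eq
        rw [csnd, List.sum_append, hsum1, hsum2] at this
        rw [this, hd]
  · -- G ∘ F = id
    rintro ⟨σ, l⟩ hx
    rw [Finset.mem_coe, Finset.mem_sigma] at hx
    obtain ⟨hσ, hl⟩ := hx
    obtain ⟨hperm, hθs, hπs⟩ := mem_shuffles.1 hσ
    have hσnd : σ.Nodup := hperm.nodup_iff.2 h
    obtain ⟨hlen, hpw, hsum⟩ := mem_Cset.1 hl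
    dsimp only
    set zl := σ.zip l with hzl
    have mzfst : zl.map Prod.fst = σ := List.map_fst_zip (le_of_eq hlen.symm)
    have mzsnd : zl.map Prod.snd = l := List.map_snd_zip (le_of_eq hlen)
    set u1 := zl.filter (fun p => decide (p.1 ∈ θ)) with hu1
    set u2 := zl.filter (fun p => decide (p.1 ∈ π)) with hu2
    have m1fst : u1.map Prod.fst = θ := by
      rw [hu1, map_fst_filter (fun x => decide (x ∈ θ)) zl, mzfst]
      exact filter_mem_of_sublist hθs hσnd
    have m2fst : u2.map Prod.fst = π := by
      rw [hu2, map_fst_filter (fun x => decide (x ∈ π)) zl, mzfst]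
      exact filter_mem_of_sublist hπs hσnd
    have hzip1 : θ.zip (u1.map Prod.snd) = u1 := by
      conv_lhs => rw [← m1fst]
      exact zip_fst_snd u1
    have hzip2 : π.zip (u2.map Prod.snd) = u2 := by
      conv_lhs => rw [← m2fst]
      exact zip_fst_snd u2
    have hmem_excl : ∀ p ∈ zl, (decide (p.1 ∈ π) : Bool) = !(decide (p.1 ∈ θ)) := by
      rintro ⟨a, b⟩ hp
      have ha : a ∈ σ := (List.of_mem_zip hp).1
      have ha' : a ∈ θ ++ π := hperm.subset ha
      rcases List.mem_append.1 ha' with haθ | haπ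
      · have : a ∉ π := hdisj haθ
        simp [haθ, this]
      · have : a ∉ θ := fun hc => hdisj hc haπ
        simp [haπ, this]
    have hperm12 : (u1 ++ u2).Perm zl := by
      have : u2 = zl.filter (fun p => !(decide (p.1 ∈ θ))) := List.filter_congr hmem_excl
      rw [this]
      exact List.filter_append_perm _ zl
    have hmsperm : ((u1 ++ u2).mergeSort ble).Perm zl :=
      (List.mergeSort_perm (u1 ++ u2) ble).trans hperm12
    have pdist : ((u1 ++ u2).mergeSort ble).Pairwise (fun a b => a.1 ≠ b.1) := by
      apply List.pairwise_map.1
      have : (((u1 ++ u2).mergeSort ble).map Prod.fst).Perm σ := mzfst ▸ hmsperm.map Prod.fst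
      exact this.nodup_iff.2 hσnd
    have pmsle := List.pairwise_mergeSort ble_trans ble_total (u1 ++ u2)
    have pmsR : ((u1 ++ u2).mergeSort ble).Pairwise Rel :=
      pairwise_rel_of_sorted pmsle pdist
    have hmseq : (u1 ++ u2).mergeSort ble = zl := eq_of_perm_of_rel hmsperm pmsR hpw
    rw [hzip1, hzip2, hmseq, mzfst, mzsnd]
  · -- F ∘ G = id
    rintro ⟨⟨d1, d2⟩, l1, l2⟩ hy
    rw [Finset.mem_coe, Finset.mem_sigma, Finset.HasAntidiagonal.mem_antidiagonal, Finset.mem_product] at hy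
    obtain ⟨hd, hl1, hl2⟩ := hy
    obtain ⟨hlen1, hpw1, hsum1⟩ := mem_Cset.1 hl1
    obtain ⟨hlen2, hpw2, hsum2⟩ := mem_Cset.1 hl2
    dsimp only at *
    set c := θ.zip l1 ++ π.zip l2 with hc
    set ms := c.mergeSort ble with hms
    have hmsperm : ms.Perm c := List.mergeSort_perm c ble
    have cfst : c.map Prod.fst = θ ++ π := by
      rw [hc, List.map_append, List.map_fst_zip (le_of_eq hlen1.symm),
        List.map_fst_zip (le_of_eq hlen2.symm)]
    have msfst_perm : (ms.map Prod.fst).Perm (θ ++ π) := cfst ▸ hmsperm.map Prod.fst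
    have msfst_nodup : (ms.map Prod.fst).Nodup := msfst_perm.nodup_iff.2 h
    have pdist : ms.Pairwise (fun a b => a.1 ≠ b.1) := List.pairwise_map.1 msfst_nodup
    have pmsle : ms.Pairwise (fun a b => ble a b = true) :=
      List.pairwise_mergeSort ble_trans ble_total c
    have pmsR : ms.Pairwise Rel := pairwise_rel_of_sorted pmsle pdist
    have mszip : (ms.map Prod.fst).zip (ms.map Prod.snd) = ms := zip_fst_snd ms
    have hself1 : (θ.zip l1).filter (fun p => decide (p.1 ∈ θ)) = θ.zip l1 := by
      rw [List.filter_eq_self]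
      rintro ⟨a, b⟩ hp
      simpa using (List.of_mem_zip hp).1
    have hnil1 : (π.zip l2).filter (fun p => decide (p.1 ∈ θ)) = [] := by
      rw [List.filter_eq_nil_iff]
      rintro ⟨a, b⟩ hp
      have := (List.of_mem_zip hp).1
      simp only [decide_eq_true_eq]
      exact fun hc' => hdisj hc' this
    have hself2 : (π.zip l2).filter (fun p => decide (p.1 ∈ π)) = π.zip l2 := by
      rw [List.filter_eq_self]
      rintro ⟨a, b⟩ hp
      simpa using (List.of_mem_zip hp).1
    have hnil2 : (θ.zip l1).filter (fun p => decide (p.1 ∈ π)) = [] := by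
      rw [List.filter_eq_nil_iff]
      rintro ⟨a, b⟩ hp
      have := (List.of_mem_zip hp).1
      simp only [decide_eq_true_eq]
      exact fun hc' => hdisj this hc'
    have hfil1 : ms.filter (fun p => decide (p.1 ∈ θ)) = θ.zip l1 := by
      apply eq_of_perm_of_rel
      · have hp1 : (ms.filter (fun p => decide (p.1 ∈ θ))).Perm
            (c.filter (fun p => decide (p.1 ∈ θ))) := hmsperm.filter _
        have hp2 : c.filter (fun p => decide (p.1 ∈ θ)) = θ.zip l1 := by
          rw [hc, List.filter_append, hself1, hnil1, List.append_nil]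
        exact hp2 ▸ hp1
      · exact pmsR.sublist (List.filter_sublist (l := ms))
      · exact hpw1
    have hfil2 : ms.filter (fun p => decide (p.1 ∈ π)) = π.zip l2 := by
      apply eq_of_perm_of_rel
      · have hp1 : (ms.filter (fun p => decide (p.1 ∈ π))).Perm
            (c.filter (fun p => decide (p.1 ∈ π))) := hmsperm.filter _
        have hp2 : c.filter (fun p => decide (p.1 ∈ π)) = π.zip l2 := by
          rw [hc, List.filter_append, hnil2, hself2, List.nil_append]
        exact hp2 ▸ hp1
      · exact pmsR.sublist (List.filter_sublist (l := ms))
      · exact hpw2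
    rw [mszip, hfil1, hfil2,
      List.map_snd_zip (le_of_eq hlen1), List.map_snd_zip (le_of_eq hlen2),
      hsum1, hsum2]




open PowerSeries in
noncomputable def Ps (m : ℕ) : PowerSeries ℚ := PowerSeries.mk fun e => (p m e : ℚ)

noncomputable def APS (w : List ℤ) : PowerSeries ℚ := PowerSeries.mk fun e => (A w e : ℚ)

noncomputable def EP (m : ℕ) : PowerSeries ℚ :=
  ∏ i ∈ Finset.range m, (1 - (PowerSeries.X : PowerSeries ℚ) ^ (i + 1))

lemma Ps_mul_EP (m : ℕ) : Ps m * EP m = 1 := by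
  induction m with
  | zero =>
    have h0 : Ps 0 = 1 := by
      apply PowerSeries.ext
      intro e
      rw [PowerSeries.coeff_one]
      simp only [Ps, PowerSeries.coeff_mk, p_zero]
      split_ifs <;> simp
    rw [h0, EP]
    simp
  | succ m ih =>
    have key : Ps (m + 1) * (1 - (PowerSeries.X : PowerSeries ℚ) ^ (m + 1)) = Ps m := by
      apply PowerSeries.ext
      intro e
      rw [mul_sub, mul_one, map_sub, PowerSeries.coeff_mul_X_pow']
      simp only [Ps, PowerSeries.coeff_mk]
      rw [p_succ m e]
      split_ifs with hc
      · push_cast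
        ring
      · push_cast
        ring
    have hEP : EP (m + 1) = EP m * (1 - (PowerSeries.X : PowerSeries ℚ) ^ (m + 1)) := by
      rw [EP, EP, Finset.prod_range_succ]
    calc Ps (m + 1) * EP (m + 1)
        = (Ps (m + 1) * (1 - (PowerSeries.X : PowerSeries ℚ) ^ (m + 1))) * EP m := by
          rw [hEP]; ring
      _ = Ps m * EP m := by rw [key]
      _ = 1 := ih

lemma APS_eq (w : List ℤ) (hw : w.Nodup) :
    APS w = Ps w.length * (PowerSeries.X : PowerSeries ℚ) ^ (maj w) := by
  apply PowerSeries.ext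
  intro e
  rw [PowerSeries.coeff_mul_X_pow']
  simp only [APS, Ps, PowerSeries.coeff_mk]
  rw [A_eq w hw e]
  split_ifs <;> simp

lemma APS_split (θ π : List ℤ) (h : (θ ++ π).Nodup) :
    ∑ σ ∈ shuffles θ π, APS σ = APS θ * APS π := by
  apply PowerSeries.ext
  intro e
  rw [map_sum, PowerSeries.coeff_mul]
  simp only [APS, PowerSeries.coeff_mk]
  exact_mod_cast A_split θ π h e

lemma length_of_mem_shuffles {θ π σ : List ℤ} (hσ : σ ∈ shuffles θ π) :
    σ.length = θ.length + π.length := by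
  have := (mem_shuffles.1 hσ).1.length_eq
  simpa using this

lemma nodup_of_mem_shuffles {θ π σ : List ℤ} (h : (θ ++ π).Nodup) (hσ : σ ∈ shuffles θ π) :
    σ.Nodup := ((mem_shuffles.1 hσ).1.nodup_iff).2 h

/-- the central power-series identity for two words -/
lemma ps_identity (θ π : List ℤ) (h : (θ ++ π).Nodup) :
    (∑ σ ∈ shuffles θ π, (PowerSeries.X : PowerSeries ℚ) ^ maj σ) * (EP θ.length * EP π.length)
      = (PowerSeries.X : PowerSeries ℚ) ^ (maj θ + maj π) * EP (θ.length + π.length) := by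
  set a := θ.length
  set b := π.length
  set n := a + b with hn
  set S := ∑ σ ∈ shuffles θ π, (PowerSeries.X : PowerSeries ℚ) ^ maj σ with hS
  set T := (PowerSeries.X : PowerSeries ℚ) ^ (maj θ + maj π) with hT
  obtain ⟨hθnd, hπnd, _⟩ := List.nodup_append'.1 h
  have hps : S * Ps n = T * (Ps a * Ps b) := by
    have e1 : ∀ σ ∈ shuffles θ π, APS σ = Ps n * (PowerSeries.X : PowerSeries ℚ) ^ maj σ := by
      intro σ hσ
      rw [APS_eq σ (nodup_of_mem_shuffles h hσ), length_of_mem_shuffles hσ]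
    have e2 : ∑ σ ∈ shuffles θ π, APS σ = Ps n * S := by
      rw [hS, Finset.mul_sum]
      exact Finset.sum_congr rfl e1
    have e3 := APS_split θ π h
    rw [e2, APS_eq θ hθnd, APS_eq π hπnd] at e3
    rw [hT, pow_add]
    calc S * Ps n = Ps n * S := by ring
      _ = Ps a * PowerSeries.X ^ maj θ * (Ps b * PowerSeries.X ^ maj π) := e3
      _ = PowerSeries.X ^ maj θ * PowerSeries.X ^ maj π * (Ps a * Ps b) := by ring
  have hPa := Ps_mul_EP a
  have hPb := Ps_mul_EP b
  have hPn := Ps_mul_EP n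
  have hane : Ps a ≠ 0 := left_ne_zero_of_mul_eq_one hPa
  have hbne : Ps b ≠ 0 := left_ne_zero_of_mul_eq_one hPb
  have hnne : Ps n ≠ 0 := left_ne_zero_of_mul_eq_one hPn
  apply mul_right_cancel₀ (mul_ne_zero (mul_ne_zero hane hbne) hnne)
  calc S * (EP a * EP b) * (Ps a * Ps b * Ps n)
      = (S * Ps n) * ((Ps a * EP a) * (Ps b * EP b)) := by ring
    _ = (T * (Ps a * Ps b)) * 1 := by rw [hps, hPa, hPb, mul_one]
    _ = (T * (Ps a * Ps b)) * (Ps n * EP n) := by rw [hPn]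
    _ = T * EP n * (Ps a * Ps b * Ps n) := by ring

/-- polynomial version of the product of cyclotomic-like factors -/
noncomputable def Epoly (m : ℕ) : Polynomial ℚ :=
  ∏ i ∈ Finset.range m, (1 - (Polynomial.X : Polynomial ℚ) ^ (i + 1))

lemma Epoly_coe (m : ℕ) :
    Polynomial.coeToPowerSeries.ringHom (R := ℚ) (Epoly m) = EP m := by
  rw [Epoly, EP, map_prod]
  apply Finset.prod_congr rfl
  intro i _
  rw [map_sub, map_one, map_pow]
  congr 1
  rw [Polynomial.coeToPowerSeries.ringHom_apply, Polynomial.coe_X]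

lemma Epoly_eq (m : ℕ) :
    Epoly m = (1 - (Polynomial.X : Polynomial ℚ)) ^ m * qFact m := by
  have hc : (1 - (Polynomial.X : Polynomial ℚ)) ^ m
      = ∏ _i ∈ Finset.range m, (1 - (Polynomial.X : Polynomial ℚ)) := by
    rw [Finset.prod_const, Finset.card_range]
  rw [Epoly, qFact, hc, ← Finset.prod_mul_distrib]
  apply Finset.prod_congr rfl
  intro i _
  have hg := geom_sum_mul (Polynomial.X : Polynomial ℚ) (i + 1)
  linear_combination hg

lemma two_word (θ π : List ℤ) (h : (θ ++ π).Nodup) :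
    (∑ σ ∈ shuffles θ π, (Polynomial.X : Polynomial ℚ) ^ maj σ)
        * (qFact θ.length * qFact π.length)
      = qFact (θ.length + π.length) * (Polynomial.X : Polynomial ℚ) ^ (maj θ + maj π) := by
  set a := θ.length
  set b := π.length
  have hpoly :
      (∑ σ ∈ shuffles θ π, (Polynomial.X : Polynomial ℚ) ^ maj σ) * (Epoly a * Epoly b)
        = (Polynomial.X : Polynomial ℚ) ^ (maj θ + maj π) * Epoly (a + b) := by
    apply Polynomial.coe_inj.1
    have hmap := ps_identity θ π h
    have lhs : ((((∑ σ ∈ shuffles θ π, (Polynomial.X : Polynomial ℚ) ^ maj σ)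
        * (Epoly a * Epoly b)) : Polynomial ℚ) : PowerSeries ℚ)
        = (∑ σ ∈ shuffles θ π, (PowerSeries.X : PowerSeries ℚ) ^ maj σ)
          * (EP a * EP b) := by
      rw [← Polynomial.coeToPowerSeries.ringHom_apply, map_mul, map_mul, map_sum]
      rw [Epoly_coe, Epoly_coe]
      congr 1
      apply Finset.sum_congr rfl
      intro σ _
      rw [map_pow, Polynomial.coeToPowerSeries.ringHom_apply, Polynomial.coe_X]
    have rhs : ((((Polynomial.X : Polynomial ℚ) ^ (maj θ + maj π) * Epoly (a + b))
        : Polynomial ℚ) : PowerSeries ℚ)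
        = (PowerSeries.X : PowerSeries ℚ) ^ (maj θ + maj π) * EP (a + b) := by
      rw [← Polynomial.coeToPowerSeries.ringHom_apply, map_mul, map_pow, Epoly_coe,
        Polynomial.coeToPowerSeries.ringHom_apply, Polynomial.coe_X]
    rw [lhs, rhs]
    exact hmap
  rw [Epoly_eq, Epoly_eq, Epoly_eq] at hpoly
  have hone : (1 - (Polynomial.X : Polynomial ℚ)) ≠ 0 := by
    intro hzero
    have := congrArg (Polynomial.eval 0) hzero
    simp at this
  apply mul_right_cancel₀ (pow_ne_zero (a + b) hone)
  calc (∑ σ ∈ shuffles θ π, (Polynomial.X : Polynomial ℚ) ^ maj σ)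
        * (qFact a * qFact b) * (1 - Polynomial.X) ^ (a + b)
      = (∑ σ ∈ shuffles θ π, (Polynomial.X : Polynomial ℚ) ^ maj σ)
        * ((1 - Polynomial.X) ^ a * qFact a * ((1 - Polynomial.X) ^ b * qFact b)) := by
        rw [pow_add]; ring
    _ = (Polynomial.X : Polynomial ℚ) ^ (maj θ + maj π)
        * ((1 - Polynomial.X) ^ (a + b) * qFact (a + b)) := hpoly
    _ = qFact (a + b) * (Polynomial.X : Polynomial ℚ) ^ (maj θ + maj π)
        * (1 - Polynomial.X) ^ (a + b) := by ring




lemma maj_nil : maj ([] : List ℤ) = 0 := by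
  unfold maj descSet
  rw [show (List.length ([] : List ℤ)) - 1 = 0 by simp, Finset.Icc_eq_empty (by omega)]
  simp

lemma mem_shufflesMulti {L : List (List ℤ)} {σ : List ℤ} :
    σ ∈ shufflesMulti L ↔ σ.Perm L.flatten ∧ ∀ w ∈ L, w.Sublist σ := by
  unfold shufflesMulti
  rw [Finset.mem_filter, List.mem_toFinset, List.mem_permutations]

lemma shufflesMulti_nil : shufflesMulti ([] : List (List ℤ)) = {[]} := by
  apply Finset.ext
  intro σ
  rw [mem_shufflesMulti, Finset.mem_singleton]
  simp

lemma shufflesMulti_cons (w : List ℤ) (L : List (List ℤ))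
    (h : (w :: L).flatten.Nodup) :
    shufflesMulti (w :: L) = (shufflesMulti L).biUnion (fun τ => shuffles w τ) := by
  have hfc : (w :: L).flatten = w ++ L.flatten := List.flatten_cons
  rw [hfc] at h
  obtain ⟨hw, hfl, hdisj⟩ := List.nodup_append'.1 h
  apply Finset.ext
  intro σ
  rw [Finset.mem_biUnion, mem_shufflesMulti]
  constructor
  · rintro ⟨hperm, hsub⟩
    rw [hfc] at hperm
    have hσnd : σ.Nodup := hperm.nodup_iff.2 h
    set τ := σ.filter (fun x => decide (x ∉ w)) with hτ
    have hτperm : τ.Perm L.flatten := by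
      have h1 : τ.Perm ((w ++ L.flatten).filter (fun x => decide (x ∉ w))) :=
        hperm.filter _
      have h2 : (w ++ L.flatten).filter (fun x => decide (x ∉ w)) = L.flatten := by
        rw [List.filter_append]
        have e1 : w.filter (fun x => decide (x ∉ w)) = [] := by
          rw [List.filter_eq_nil_iff]
          intro a ha
          simp [ha]
        have e2 : L.flatten.filter (fun x => decide (x ∉ w)) = L.flatten := by
          rw [List.filter_eq_self]
          intro a ha
          simp only [decide_eq_true_eq]
          exact fun hc => hdisj hc ha
        rw [e1, e2, List.nil_append]
      exact h2 ▸ h1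
    refine ⟨τ, mem_shufflesMulti.2 ⟨hτperm, ?_⟩, mem_shuffles.2 ⟨?_, ?_, ?_⟩⟩
    · intro u hu
      have hus : u.Sublist σ := hsub u (List.mem_cons_of_mem w hu)
      have hue : u.filter (fun x => decide (x ∉ w)) = u := by
        rw [List.filter_eq_self]
        intro a ha
        simp only [decide_eq_true_eq]
        have : a ∈ L.flatten := List.mem_flatten.2 ⟨u, hu, ha⟩
        exact fun hc => hdisj hc this
      rw [hτ, ← hue]
      exact hus.filter _
    · exact hperm.trans (List.Perm.append_left w hτperm.symm)
    · exact hsub w List.mem_cons_self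
    · exact List.filter_sublist
  · rintro ⟨τ, hτ, hσ⟩
    obtain ⟨hτperm, hτsub⟩ := mem_shufflesMulti.1 hτ
    obtain ⟨hperm, hws, hτs⟩ := mem_shuffles.1 hσ
    constructor
    · rw [hfc]
      exact hperm.trans (List.Perm.append_left w hτperm)
    · intro u hu
      rcases List.mem_cons.1 hu with rfl | huL
      · exact hws
      · exact (hτsub u huL).trans hτs

lemma shuffles_disjoint (w : List ℤ) (L : List (List ℤ))
    (h : (w :: L).flatten.Nodup) :
    Set.PairwiseDisjoint ↑(shufflesMulti L) (fun τ => shuffles w τ) := by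
  have hfc : (w :: L).flatten = w ++ L.flatten := List.flatten_cons
  rw [hfc] at h
  intro τ hτ τ' hτ' hne
  simp only [Finset.mem_coe] at hτ hτ'
  obtain ⟨hp, _⟩ := mem_shufflesMulti.1 hτ
  obtain ⟨hp', _⟩ := mem_shufflesMulti.1 hτ'
  apply Finset.disjoint_left.2
  intro σ hσ hσ'
  obtain ⟨hperm, _, hsub⟩ := mem_shuffles.1 hσ
  obtain ⟨_, _, hsub'⟩ := mem_shuffles.1 hσ'
  have hσnd : σ.Nodup := by
    have : σ.Perm (w ++ L.flatten) := hperm.trans (List.Perm.append_left w hp)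
    exact this.nodup_iff.2 h
  exact hne (sublist_eq_of_perm hsub hsub' hσnd (hp.trans hp'.symm))

lemma qFact_eval_zero (m : ℕ) : (qFact m).eval 0 = 1 := by
  unfold qFact
  rw [Polynomial.eval_prod]
  apply Finset.prod_eq_one
  intro i _
  rw [Polynomial.eval_finset_sum]
  have : ∀ j ∈ Finset.range (i + 1), ((Polynomial.X : Polynomial ℚ) ^ j).eval 0
      = if j = 0 then 1 else 0 := by
    intro j _
    rw [Polynomial.eval_pow, Polynomial.eval_X]
    rcases eq_or_ne j 0 with rfl | hj
    · simp
    · rw [if_neg hj, zero_pow hj]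
  rw [Finset.sum_congr rfl this, Finset.sum_ite_eq' (Finset.range (i+1)) 0 (fun _ => (1:ℚ))]
  simp

lemma qFact_ne_zero (m : ℕ) : qFact m ≠ 0 := by
  intro h
  have := qFact_eval_zero m
  rw [h] at this
  simp at this

lemma multi (L : List (List ℤ)) (h : L.flatten.Nodup) :
    (∑ σ ∈ shufflesMulti L, (Polynomial.X : Polynomial ℚ) ^ maj σ)
        * (L.map (fun w => qFact w.length)).prod
      = qFact L.flatten.length * (Polynomial.X : Polynomial ℚ) ^ ((L.map maj).sum) := by
  induction L with
  | nil =>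
    rw [shufflesMulti_nil]
    simp [maj_nil, qFact]
  | cons w L ih =>
    have hfc : (w :: L).flatten = w ++ L.flatten := List.flatten_cons
    have h' : (w ++ L.flatten).Nodup := hfc ▸ h
    obtain ⟨hw, hfl, hdisj⟩ := List.nodup_append'.1 h'
    have ihe := ih hfl
    set a := w.length with ha
    set b := L.flatten.length with hb
    set prodL := (L.map (fun u => qFact u.length)).prod with hprodL
    set S2 := ∑ τ ∈ shufflesMulti L, (Polynomial.X : Polynomial ℚ) ^ maj τ with hS2
    have hsum : ∑ σ ∈ shufflesMulti (w :: L), (Polynomial.X : Polynomial ℚ) ^ maj σ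
        = ∑ τ ∈ shufflesMulti L, ∑ σ ∈ shuffles w τ, (Polynomial.X : Polynomial ℚ) ^ maj σ := by
      rw [shufflesMulti_cons w L h]
      exact Finset.sum_biUnion (shuffles_disjoint w L h)
    have htw : ∀ τ ∈ shufflesMulti L,
        (∑ σ ∈ shuffles w τ, (Polynomial.X : Polynomial ℚ) ^ maj σ) * (qFact a * qFact b)
          = qFact (a + b) * ((Polynomial.X : Polynomial ℚ) ^ maj w
              * (Polynomial.X : Polynomial ℚ) ^ maj τ) := by
      intro τ hτ
      obtain ⟨hτperm, _⟩ := mem_shufflesMulti.1 hτ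
      have hwt : (w ++ τ).Nodup := by
        have : (w ++ τ).Perm (w ++ L.flatten) := List.Perm.append_left w hτperm
        exact this.nodup_iff.2 h'
      have hlen : τ.length = b := hτperm.length_eq
      have := two_word w τ hwt
      rw [hlen] at this
      rw [this, pow_add]
    have hflen : (w :: L).flatten.length = a + b := by
      rw [hfc, List.length_append]
    have hmmaj : ((w :: L).map maj).sum = maj w + (L.map maj).sum := by
      simp
    have hmprod : ((w :: L).map (fun u => qFact u.length)).prod = qFact a * prodL := by
      simp [hprodL, ha]
    rw [hflen, hmmaj, hmprod, hsum]
    apply mul_right_cancel₀ (qFact_ne_zero b)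
    have key : ∀ τ ∈ shufflesMulti L,
        (∑ σ ∈ shuffles w τ, (Polynomial.X : Polynomial ℚ) ^ maj σ) * (qFact a * prodL)
            * qFact b
          = qFact (a + b) * ((Polynomial.X : Polynomial ℚ) ^ maj w
              * (Polynomial.X : Polynomial ℚ) ^ maj τ) * prodL := by
      intro τ hτ
      linear_combination prodL * (htw τ hτ)
    calc (∑ τ ∈ shufflesMulti L, ∑ σ ∈ shuffles w τ, (Polynomial.X : Polynomial ℚ) ^ maj σ)
          * (qFact a * prodL) * qFact b
        = ∑ τ ∈ shufflesMulti L, qFact (a + b) * ((Polynomial.X : Polynomial ℚ) ^ maj w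
            * (Polynomial.X : Polynomial ℚ) ^ maj τ) * prodL := by
          rw [Finset.sum_mul, Finset.sum_mul]
          exact Finset.sum_congr rfl key
      _ = qFact (a + b) * (Polynomial.X : Polynomial ℚ) ^ maj w * (S2 * prodL) := by
          rw [hS2, Finset.sum_mul, Finset.mul_sum]
          apply Finset.sum_congr rfl
          intro τ _
          ring
      _ = qFact (a + b) * (Polynomial.X : Polynomial ℚ) ^ maj w
            * (qFact b * (Polynomial.X : Polynomial ℚ) ^ ((L.map maj).sum)) := by
          rw [ihe]
      _ = qFact (a + b) * (Polynomial.X : Polynomial ℚ) ^ (maj w + (L.map maj).sum)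
            * qFact b := by
          rw [pow_add]
          ring


end GG


lemma W_eq (n : ℕ) : W n = (List.range n).map (fun i : ℕ => (i : ℤ) + 1) := by
  unfold W
  induction n with
  | zero => rfl
  | succ m ih => rw [List.range_succ]; simp_all

/-- Garsia–Gessel: for words π₁,...,π_k forming ordered complementary subsets of [n],
the generating function for maj over all shuffles of π₁,...,π_k is the q-multinomial
coefficient [n; a₁,...,a_k]_q times q^(maj π₁ + ... + maj π_k). -/
theorem garsia_gessel (n k : ℕ) (L : List (List ℤ)) (hk : L.length = k)
    (hperm : L.flatten.Perm (W n)) :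
    ∑ σ ∈ shufflesMulti L, (X : Polynomial ℚ) ^ (maj σ) =
      (qFact n / (L.map (fun w => qFact w.length)).prod) *
        (X : Polynomial ℚ) ^ ((L.map maj).sum) := by
  classical
  have hinj : Function.Injective (fun i : ℕ => (i : ℤ) + 1) := by
    intro x y hxy
    simp only [add_left_inj, Nat.cast_inj] at hxy
    exact hxy
  have hWnodup : (W n).Nodup := by
    rw [W_eq]
    exact List.Nodup.map hinj List.nodup_range
  have hn : L.flatten.Nodup := hperm.nodup_iff.2 hWnodup
  have hWlen : (W n).length = n := by
    rw [W_eq, List.length_map, List.length_range]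
  have hlen : L.flatten.length = n := hperm.length_eq.trans hWlen
  have hmulti := GG.multi L hn
  rw [hlen] at hmulti
  set A := ∑ σ ∈ shufflesMulti L, (X : Polynomial ℚ) ^ (maj σ) with hA
  set B := (L.map (fun w => qFact w.length)).prod with hB
  set s := (L.map maj).sum with hs
  have hBne : B ≠ 0 := by
    rw [hB]
    apply List.prod_ne_zero
    intro hc
    obtain ⟨w, _, hw⟩ := List.mem_map.1 hc
    exact GG.qFact_ne_zero w.length hw
  have hBeval : B.eval 0 = 1 := by
    rw [hB, Polynomial.eval_list_prod, List.map_map]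
    apply List.prod_eq_one
    intro x hx
    obtain ⟨w, _, hw⟩ := List.mem_map.1 hx
    rw [← hw]
    exact GG.qFact_eval_zero w.length
  have hXB : ¬ ((X : Polynomial ℚ) ∣ B) := by
    rw [Polynomial.X_dvd_iff, Polynomial.coeff_zero_eq_eval_zero, hBeval]
    exact one_ne_zero
  have hcop : IsCoprime B ((X : Polynomial ℚ) ^ s) :=
    (((Polynomial.irreducible_X.coprime_iff_not_dvd).2 hXB).symm).pow_right
  have hdvd : B ∣ qFact n := by
    apply hcop.dvd_of_dvd_mul_right
    rw [← hmulti]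
    exact dvd_mul_left B A
  obtain ⟨C, hC⟩ := hdvd
  have hdiv : qFact n / B = C := by
    rw [hC]
    exact mul_div_cancel_left₀ C hBne
  rw [hdiv]
  apply mul_right_cancel₀ hBne
  calc A * B = qFact n * X ^ s := hmulti
    _ = B * C * X ^ s := by rw [← hC]
    _ = C * X ^ s * B := by ring
end

section
/- Let σ be a word consisting of the elements 1,...,n−1 in some order (a permutation of [n−1]). Then the major increment upon inserting n at position k is: mi(σ,k,n) = 0 if k = n; mi(σ,k,n) = d_k(σ) + k if k < n and either k = 1 or k−1 is not a descent of σ; and mi(σ,k,n) = d_k(σ) + 1 if k < n and k−1 is a descent of σ. -/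
open Polynomial

lemma getD_insertIdx (l : List ℤ) (x : ℤ) (p j : ℕ) (hp : p ≤ l.length) :
    (l.insertIdx p x).getD j 0 =
      if j < p then l.getD j 0 else if j = p then x else l.getD (j - 1) 0 := by
  have hlen : (l.insertIdx p x).length = l.length + 1 := List.length_insertIdx_of_le_length hp x
  split_ifs with h1 h2
  · have hj : j < l.length := lt_of_lt_of_le h1 hp
    rw [List.getD_eq_getElem _ _ (by omega), List.getD_eq_getElem _ _ hj]
    exact List.getElem_insertIdx_of_lt h1 (by omega)
  · subst h2
    rw [List.getD_eq_getElem _ _ (by omega)]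
    exact List.getElem_insertIdx_self (by omega)
  · by_cases hj : j ≤ l.length
    · have hj1 : j - 1 < l.length := by omega
      rw [List.getD_eq_getElem _ _ (by omega), List.getD_eq_getElem _ _ hj1]
      have e1 : p + (j - 1 - p) + 1 = j := by omega
      have e2 : p + (j - 1 - p) = j - 1 := by omega
      have := List.getElem_insertIdx_add_succ l x p (j - 1 - p) (by omega)
      simp_rw [e1, e2] at this
      exact this
    · rw [List.getD_eq_default _ _ (by omega), List.getD_eq_default _ _ (by omega)]

lemma mem_descSet_bounds {w : List ℤ} {i : ℕ} (h : i ∈ descSet w) :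
    1 ≤ i ∧ i ≤ w.length - 1 := by
  simp only [descSet, Finset.mem_filter, Finset.mem_Icc] at h
  exact h.1

lemma descSet_insertIdx (σ : List ℤ) (r : ℤ) (hr : ∀ x ∈ σ, x < r) (k : ℕ)
    (hk1 : 1 ≤ k) (hk : k ≤ σ.length + 1) :
    descSet (σ.insertIdx (k - 1) r) =
      ((descSet σ).filter (fun i => i < k - 1)) ∪
      ((if k ≤ σ.length then ({k} : Finset ℕ) else ∅) ∪
       ((descSet σ).filter (fun i => k ≤ i)).image (fun i => i + 1)) := by
  have hp : k - 1 ≤ σ.length := by omega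
  have hlen : (σ.insertIdx (k - 1) r).length = σ.length + 1 := List.length_insertIdx_of_le_length hp _
  have hget : ∀ j, (σ.insertIdx (k - 1) r).getD j 0 =
      if j < k - 1 then σ.getD j 0 else if j = k - 1 then r else σ.getD (j - 1) 0 :=
    fun j => getD_insertIdx σ r (k - 1) j hp
  have hrD : ∀ j, j < σ.length → σ.getD j 0 < r := by
    intro j hj
    rw [List.getD_eq_getElem _ _ hj]
    exact hr _ (List.getElem_mem hj)
  ext i
  simp only [descSet, Finset.mem_filter, Finset.mem_Icc, Finset.mem_union, Finset.mem_image,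
    Finset.mem_singleton, hlen, hget, Nat.add_sub_cancel]
  constructor
  · rintro ⟨⟨hi1, hi2⟩, hd⟩
    rcases lt_trichotomy i (k - 1) with hik | hik | hik
    · rw [if_pos (show i - 1 < k - 1 by omega), if_pos hik] at hd
      exact Or.inl ⟨⟨⟨hi1, by omega⟩, hd⟩, hik⟩
    · rw [if_pos (show i - 1 < k - 1 by omega), if_neg (by omega), if_pos (by omega)] at hd
      exact absurd hd (not_lt.mpr (le_of_lt (hrD _ (by omega))))
    · rcases Nat.lt_or_ge (k) i with hik' | hik'
      · rw [if_neg (by omega), if_neg (by omega), if_neg (by omega), if_neg (by omega)] at hd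
        exact Or.inr (Or.inr ⟨i - 1, ⟨⟨⟨by omega, by omega⟩, hd⟩, by omega⟩, by omega⟩)
      · have hik'' : i = k := by omega
        subst hik''
        refine Or.inr (Or.inl ?_)
        rw [if_pos (show i ≤ σ.length by omega)]
        simp
  · rintro (⟨⟨⟨hd1, hd2⟩, hd⟩, hik⟩ | hik | ⟨d, ⟨⟨⟨hd1, hd2⟩, hd⟩, hkd⟩, rfl⟩)
    · refine ⟨⟨hd1, by omega⟩, ?_⟩
      rw [if_pos (show i - 1 < k - 1 by omega), if_pos hik]
      exact hd
    · rcases le_or_gt k σ.length with hkm | hkm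
      · rw [if_pos hkm] at hik
        simp only [Finset.mem_singleton] at hik
        subst hik
        refine ⟨⟨by omega, by omega⟩, ?_⟩
        rw [if_neg (by omega), if_pos (by omega), if_neg (by omega), if_neg (by omega)]
        exact hrD _ (by omega)
      · rw [if_neg (by omega)] at hik
        simp at hik
    · refine ⟨⟨by omega, by omega⟩, ?_⟩
      rw [if_neg (by omega), if_neg (by omega), if_neg (by omega), if_neg (by omega)]
      simpa using hd

lemma mi_formula (σ : List ℤ) (r : ℤ) (hr : ∀ x ∈ σ, x < r) (k : ℕ)
    (hk1 : 1 ≤ k) (hk : k ≤ σ.length + 1) :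
    mi σ k r = (if k ≤ σ.length then (k : ℤ) else 0) + (dstat σ k : ℤ) -
      (if k - 1 ∈ descSet σ then ((k : ℤ) - 1) else 0) := by
  have hd2 : Disjoint (if k ≤ σ.length then ({k} : Finset ℕ) else ∅)
      (((descSet σ).filter (fun i => k ≤ i)).image (fun i => i + 1)) := by
    rw [Finset.disjoint_left]
    intro a ha hb
    simp only [Finset.mem_image, Finset.mem_filter] at hb
    obtain ⟨d, ⟨_, hkd⟩, rfl⟩ := hb
    split_ifs at ha <;> simp at ha <;> omega
  have hd1 : Disjoint ((descSet σ).filter (fun i => i < k - 1))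
      ((if k ≤ σ.length then ({k} : Finset ℕ) else ∅) ∪
       ((descSet σ).filter (fun i => k ≤ i)).image (fun i => i + 1)) := by
    rw [Finset.disjoint_left]
    intro a ha hb
    simp only [Finset.mem_filter] at ha
    simp only [Finset.mem_union, Finset.mem_image, Finset.mem_filter] at hb
    rcases hb with hb | ⟨d, ⟨_, hkd⟩, rfl⟩
    · split_ifs at hb <;> simp at hb <;> omega
    · omega
  have h1 : maj (σ.insertIdx (k - 1) r) =
      (∑ i ∈ (descSet σ).filter (fun i => i < k - 1), i) +
      ((if k ≤ σ.length then k else 0) +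
       ((∑ i ∈ (descSet σ).filter (fun i => k ≤ i), i) + dstat σ k)) := by
    rw [maj, descSet_insertIdx σ r hr k hk1 hk, Finset.sum_union hd1, Finset.sum_union hd2,
      Finset.sum_image (by intros a _ b _ h; simp only at h; omega)]
    congr 1
    congr 1
    · split_ifs <;> simp
    · rw [Finset.sum_add_distrib, Finset.sum_const, smul_eq_mul, mul_one]
      rfl
  have hsplit : (descSet σ).filter (fun i => ¬ i < k - 1) =
      (descSet σ).filter (fun i => i = k - 1) ∪ (descSet σ).filter (fun i => k ≤ i) := by
    ext a
    simp only [Finset.mem_filter, Finset.mem_union]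
    constructor
    · rintro ⟨h1, h2⟩
      rcases eq_or_ne a (k - 1) with h | h
      · exact Or.inl ⟨h1, h⟩
      · exact Or.inr ⟨h1, by omega⟩
    · rintro (⟨h1, h2⟩ | ⟨h1, h2⟩) <;> exact ⟨h1, by omega⟩
  have hd3 : Disjoint ((descSet σ).filter (fun i => i = k - 1))
      ((descSet σ).filter (fun i => k ≤ i)) := by
    rw [Finset.disjoint_left]
    intro a ha hb
    simp only [Finset.mem_filter] at ha hb
    have := mem_descSet_bounds ha.1
    omega
  have h2 : maj σ =
      (∑ i ∈ (descSet σ).filter (fun i => i < k - 1), i) +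
      ((if k - 1 ∈ descSet σ then k - 1 else 0) +
       (∑ i ∈ (descSet σ).filter (fun i => k ≤ i), i)) := by
    rw [maj, ← Finset.sum_filter_add_sum_filter_not (descSet σ) (fun i => i < k - 1),
      hsplit, Finset.sum_union hd3, Finset.filter_eq']
    congr 1
    split_ifs <;> simp
  rw [mi, h1, h2]
  have hb : k - 1 ∈ descSet σ → 2 ≤ k := fun h => by
    have := mem_descSet_bounds h; omega
  split_ifs with h h' h' <;> push_cast <;>
    [skip; skip; skip; skip] <;>
    (try have := hb h') <;> omega

/-- Formula (*): for σ a permutation of [n-1], the major increment upon inserting n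
at position k is 0 if k = n; dₖ(σ) + k if k = 1 or k-1 is an ascent; and
dₖ(σ) + 1 if k-1 is a descent. -/
theorem mi_insert_max (n : ℕ) (σ : List ℤ) (hσ : σ.Perm (W (n - 1))) (hn : 1 ≤ n)
    (k : ℕ) (hk1 : 1 ≤ k) (hkn : k ≤ n) :
    (k = n → mi σ k (n : ℤ) = 0) ∧
    (k < n → (k = 1 ∨ (k - 1) ∉ descSet σ) → mi σ k (n : ℤ) = (dstat σ k : ℤ) + k) ∧
    (k < n → (k - 1) ∈ descSet σ → mi σ k (n : ℤ) = (dstat σ k : ℤ) + 1) := by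
  have hm : σ.length = n - 1 := by
    rw [hσ.length_eq]
    simp [W, Function.comp_def]
  have hr : ∀ x ∈ σ, x < (n : ℤ) := by
    intro x hx
    have hx' : x ∈ W (n - 1) := hσ.mem_iff.mp hx
    simp [W] at hx'
    obtain ⟨a, ha, rfl⟩ := hx'
    have : a + 1 < n := by omega
    exact_mod_cast this
  have key := mi_formula σ (n : ℤ) hr k hk1 (by omega)
  refine ⟨?_, ?_, ?_⟩
  · intro hkeq
    subst hkeq
    have h1 : ¬ k ≤ σ.length := by omega
    have h2 : dstat σ k = 0 := by
      rw [dstat, Finset.card_eq_zero, Finset.filter_eq_empty_iff]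
      intro i hi
      have := mem_descSet_bounds hi
      omega
    have h3 : k - 1 ∉ descSet σ := by
      intro h
      have := mem_descSet_bounds h
      omega
    rw [key, h2]
    simp [h1, h3]
  · intro hklt hcase
    have h1 : k ≤ σ.length := by omega
    have h0 : k - 1 ∉ descSet σ := by
      rcases hcase with h | h
      · subst h
        intro hmem
        have := mem_descSet_bounds hmem
        omega
      · exact h
    rw [key]
    simp only [if_pos h1, if_neg h0]
    ring
  · intro hklt hdmem
    have h1 : k ≤ σ.length := by omega
    rw [key]
    simp only [if_pos h1, if_pos hdmem]
    ring
end

section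
/- Let σ be a word of n−1 distinct integers, let r be an integer greater than every letter of σ, and let s be an integer less than every letter of σ. Then for every position k with 1 ≤ k ≤ n−1, mi(σ,k,r) = mi(σ,k,s) + 1. -/
open Polynomial

lemma getD_insertIdx_aux (σ : List ℤ) (p : ℕ) (x : ℤ) (hp : p ≤ σ.length) (j : ℕ) :
    (σ.insertIdx p x).getD j 0 =
      if j < p then σ.getD j 0 else if j = p then x else σ.getD (j - 1) 0 := by
  have hlen : (σ.insertIdx p x).length = σ.length + 1 :=
    List.length_insertIdx_of_le_length hp x
  rcases lt_trichotomy j p with h | h | h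
  · rw [if_pos h]
    have hj : j < σ.length := lt_of_lt_of_le h hp
    rw [List.getD_eq_getElem _ _ (by omega), List.getD_eq_getElem _ _ hj]
    exact List.getElem_insertIdx_of_lt h _
  · subst h
    rw [if_neg (lt_irrefl j), if_pos rfl]
    rw [List.getD_eq_getElem _ _ (by omega)]
    exact List.getElem_insertIdx_self _
  · rw [if_neg (by omega), if_neg (by omega)]
    by_cases hj : j - 1 < σ.length
    · obtain ⟨t, rfl⟩ : ∃ t, j = p + t + 1 := ⟨j - p - 1, by omega⟩
      rw [List.getD_eq_getElem _ _ (by omega),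
        List.getD_eq_getElem _ _ (by omega : p + t + 1 - 1 < σ.length)]
      have := List.getElem_insertIdx_add_succ σ x p t (by omega)
      simpa using this
    · rw [List.getD_eq_default _ _ (by omega), List.getD_eq_default _ _ (by omega)]

lemma maj_cast (w : List ℤ) : (maj w : ℤ) =
    ∑ i ∈ Finset.Icc 1 (w.length - 1),
      if w.getD (i - 1) 0 > w.getD i 0 then (i : ℤ) else 0 := by
  rw [maj, descSet, Finset.sum_filter, Nat.cast_sum]
  exact Finset.sum_congr rfl fun i _ => by split <;> simp

/-- If r is greater than every letter of σ and s is less than every letter of σ, then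
for every position k with 1 ≤ k ≤ n-1, mi(σ,k,r) = mi(σ,k,s) + 1. -/
theorem mi_max_eq_mi_min_add_one (n : ℕ) (σ : List ℤ) (hnd : σ.Nodup)
    (hlen : σ.length + 1 = n) (r s : ℤ)
    (hr : ∀ x ∈ σ, x < r) (hs : ∀ x ∈ σ, s < x)
    (k : ℕ) (hk1 : 1 ≤ k) (hk : k ≤ n - 1) :
    mi σ k r = mi σ k s + 1 := by
  set m := σ.length with hm
  have hkm : k ≤ m := by omega
  set p := k - 1 with hp
  have hkp : k = p + 1 := by omega
  have hpm : p < m := by omega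
  have hpl : p ≤ σ.length := le_of_lt hpm
  have hLr : (σ.insertIdx p r).length = m + 1 := List.length_insertIdx_of_le_length hpl _
  have hLs : (σ.insertIdx p s).length = m + 1 := List.length_insertIdx_of_le_length hpl _
  -- values independent of inserted letter away from p
  have hagree : ∀ j, j ≠ p →
      (σ.insertIdx p r).getD j 0 = (σ.insertIdx p s).getD j 0 := by
    intro j hj
    rw [getD_insertIdx_aux σ p r hpl, getD_insertIdx_aux σ p s hpl]
    simp [hj]
  have hmem : σ.getD p 0 ∈ σ := by
    rw [List.getD_eq_getElem _ _ hpm]; exact List.getElem_mem _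
  have hat : ∀ x : ℤ, (σ.insertIdx p x).getD p 0 = x := by
    intro x
    rw [getD_insertIdx_aux σ p x hpl, if_neg (lt_irrefl p), if_pos rfl]
  have hnext : ∀ x : ℤ, (σ.insertIdx p x).getD (p + 1) 0 = σ.getD p 0 := by
    intro x
    rw [getD_insertIdx_aux σ p x hpl, if_neg (by omega), if_neg (by omega)]
    simp
  have er : (maj (σ.insertIdx p r) : ℤ) = ∑ i ∈ Finset.Icc 1 m,
      (if (σ.insertIdx p r).getD (i - 1) 0 > (σ.insertIdx p r).getD i 0 then (i : ℤ) else 0) := by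
    rw [maj_cast, hLr]; norm_num
  have es : (maj (σ.insertIdx p s) : ℤ) = ∑ i ∈ Finset.Icc 1 m,
      (if (σ.insertIdx p s).getD (i - 1) 0 > (σ.insertIdx p s).getD i 0 then (i : ℤ) else 0) := by
    rw [maj_cast, hLs]; norm_num
  set fr : ℕ → ℤ := fun i =>
    if (σ.insertIdx p r).getD (i - 1) 0 > (σ.insertIdx p r).getD i 0 then (i : ℤ) else 0 with hfr
  set fs : ℕ → ℤ := fun i =>
    if (σ.insertIdx p s).getD (i - 1) 0 > (σ.insertIdx p s).getD i 0 then (i : ℤ) else 0 with hfs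
  have h0 : ∀ c ∈ Finset.Icc 1 m, c ≠ p → c ≠ k → fr c - fs c = 0 := by
    intro c hc hcp hck
    rw [Finset.mem_Icc] at hc
    have h1 : c - 1 ≠ p := by omega
    rw [hfr, hfs]
    simp only
    rw [hagree _ h1, hagree _ hcp, sub_self]
  -- value at k
  have hfk : fr k - fs k = (k : ℤ) := by
    rw [hfr, hfs]
    simp only [hkp, Nat.add_sub_cancel]
    rw [hat r, hat s, hnext r, hnext s]
    rw [if_pos (hr _ hmem), if_neg (not_lt.2 (le_of_lt (hs _ hmem)))]
    simp [hkp]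
  have key : ∑ i ∈ Finset.Icc 1 m, (fr i - fs i) = 1 := by
    rcases Nat.eq_or_lt_of_le hk1 with h1 | h2
    · -- k = 1
      rw [Finset.sum_eq_single k]
      · rw [hfk, ← h1]; norm_num
      · intro b hb hbk
        have hb' := Finset.mem_Icc.1 hb
        exact h0 b hb (by omega) hbk
      · intro hks
        exact absurd (Finset.mem_Icc.2 ⟨hk1, hkm⟩) hks
    · -- k ≥ 2, so p ≥ 1
      have hp1 : 1 ≤ p := by omega
      have hprev : ∀ x : ℤ, (σ.insertIdx p x).getD (p - 1) 0 = σ.getD (p - 1) 0 := by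
        intro x
        rw [getD_insertIdx_aux σ p x hpl, if_pos (by omega)]
      have hmem' : σ.getD (p - 1) 0 ∈ σ := by
        rw [List.getD_eq_getElem _ _ (by omega)]; exact List.getElem_mem _
      have hfp : fr p - fs p = -(p : ℤ) := by
        rw [hfr, hfs]
        simp only
        rw [hprev r, hprev s, hat r, hat s]
        rw [if_neg (not_lt.2 (le_of_lt (hr _ hmem'))), if_pos (hs _ hmem')]
        ring
      rw [Finset.sum_eq_add p k (by omega) (fun c hc ⟨h1, h2⟩ => h0 c hc h1 h2)
        (fun h => absurd (Finset.mem_Icc.2 ⟨hp1, by omega⟩) h)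
        (fun h => absurd (Finset.mem_Icc.2 ⟨hk1, hkm⟩) h)]
      rw [hfp, hfk]
      have : (k : ℤ) = (p : ℤ) + 1 := by exact_mod_cast hkp
      omega
  rw [Finset.sum_sub_distrib] at key
  simp only [mi, ← hp]
  linarith [key, er, es]
end
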